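/- arXiv:0906.2710 — 2 statements merged into one kernel-verified Lean document; each statement's English description precedes it below -/
import Mathlib

section
/- Let φ be an associate of F_a and W a complex vector space. For any a(x), b(x) ∈ ℰ(W), the pairs (1_W, b(x)) and (a(x), 1_W) are φ-quasi compatible (with p = 1), and Y_ℰ^φ(1_W, z) b(x) = b(x), while Y_ℰ^φ(a(x), z) 1_W = a(φ(x,z)); in particular Y_ℰ^φ(a(x), z) 1_W involves only nonnegative powers of z, i.e., lies in ℰ(W)[[z]], and its constant term in z (its value at z = 0) is a(x). -/
noncomputable section
open scoped Classical

abbrev L : Type := LaurentSeries ℂ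
abbrev LZ : Type := PowerSeries L

def Xl : L := HahnSeries.single 1 1

/-- coefficient of `z^n x^j` in an element of `ℂ((x))[[z]]`. -/
def lzCoeff (f : LZ) (n : ℕ) (j : ℤ) : ℂ := ((PowerSeries.coeff (R := L) n) f).coeff j

/-- integer powers in a commutative ring, via `Ring.inverse` for negative exponents. -/
def zpowR {R : Type*} [CommRing R] (g : R) (m : ℤ) : R :=
  if 0 ≤ m then g ^ m.toNat else Ring.inverse g ^ (-m).toNat

/-- the Laurent series with prescribed coefficients, when it exists (else `0`). -/
def mkL (c : ℤ → ℂ) : L :=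
  if h : ∃ g : L, ∀ j, g.coeff j = c j then h.choose else 0

def mkLZ (c : ℕ → ℤ → ℂ) : LZ :=
  if h : ∃ g : LZ, ∀ n j, lzCoeff g n j = c n j then h.choose else 0

/-- Substitution `f(φ(x,z))` of `φ(x,z) ∈ ℂ((x))[[z]]` into `f ∈ ℂ((x))`. -/
def substL (f : L) (φ : LZ) : LZ :=
  mkLZ fun n j => ∑ᶠ m : ℤ, f.coeff m * lzCoeff (zpowR φ m) n j

/-- `φ(φ(x,x₂),x₀)` as an element of `ℂ((x))[[x₂]][[x₀]]` (outer variable `x₀`). -/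
def assocLHS (φ : LZ) : PowerSeries LZ :=
  PowerSeries.mk fun n => substL ((PowerSeries.coeff (R := L) n) φ) φ

/-- `φ(x,x₀+x₂)` as an element of `ℂ((x))[[x₂]][[x₀]]` (outer variable `x₀`). -/
def assocRHS (φ : LZ) : PowerSeries LZ :=
  PowerSeries.mk fun n => PowerSeries.mk fun m =>
    (((n+m).choose n : ℂ)) • (PowerSeries.coeff (R := L) (n+m)) φ

/-- `φ(x,z) ∈ ℂ((x))[[z]]` is an associate of the additive formal group:
`φ(x,0) = x` and `φ(φ(x,x₂),x₀) = φ(x,x₀+x₂)`. -/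
def IsAssociate (φ : LZ) : Prop :=
  (PowerSeries.constantCoeff (R := L)) φ = Xl ∧ assocLHS φ = assocRHS φ

/-- the formal derivative `d/dx` on `ℂ((x))`. -/
def lderiv (f : L) : L := mkL fun j => ((j+1 : ℤ) : ℂ) * f.coeff (j+1)

/-- the operator `p(x) d/dx` on `ℂ((x))`. -/
def pd (p : L) : L → L := fun f => p * lderiv f

/-- `e^{z p(x) d/dx} x = Σ_{n≥0} (z^n/n!) (p(x)d/dx)^n x ∈ ℂ((x))[[z]]`. -/
def expFlow (p : L) : LZ :=
  PowerSeries.mk fun n => ((n.factorial : ℂ))⁻¹ • ((pd p)^[n] Xl)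

/-- the exponent `(a, b)` as a multidegree for two-variable power series. -/
def idx2 (a b : ℕ) : Fin 2 →₀ ℕ := Finsupp.single 0 a + Finsupp.single 1 b

/-- Substitution `p(φ(x,z), x)` of `x₁ = φ(x,z)`, `x₂ = x` into `p(x₁,x₂) ∈ ℂ[[x₁,x₂]]`. -/
def substMv (p : MvPowerSeries (Fin 2) ℂ) (φ : LZ) : LZ :=
  mkLZ fun n j => ∑ᶠ ab : ℕ × ℕ,
    (MvPowerSeries.coeff (R := ℂ) (idx2 ab.1 ab.2) p) *
      lzCoeff (φ ^ ab.1 * (PowerSeries.C (R := L) Xl) ^ ab.2) n j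

variable (W : Type) [AddCommGroup W] [Module ℂ W]

/-- `ℰ(W) = Hom(W, W((x)))`. -/
abbrev EW := W →ₗ[ℂ] HahnSeries ℤ W

variable {W}

/-- the element of `ℰ(W)` with prescribed coefficients, when it exists (else `0`). -/
def mkEW (c : W → ℤ → W) : EW W :=
  if h : ∃ g : EW W, ∀ w j, (g w).coeff j = c w j then h.choose else 0

/-- the identity operator `1_W`, as the element `1_W x^0` of `ℰ(W)`. -/
def oneEW : EW W := mkEW fun w j => if j = 0 then w else 0

/-- the raw coefficient function of `a(x₁)b(x₂)` : coefficient of `x₁^m x₂^n` applied to `w`. -/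
def c2 (a b : EW W) (w : W) (m n : ℤ) : W := (a ((b w).coeff n)).coeff m

/-- the raw coefficient function of `u(x₂)v(x₁)` (first index: exponent of `x₁`). -/
def c2swap (u v : EW W) (w : W) (m n : ℤ) : W := (u ((v w).coeff m)).coeff n

/-- a raw two-variable series `W → W[[x₁^{±1},x₂^{±1}]]` lies in `Hom(W, W((x₁,x₂)))`. -/
def IsLT2 (F : W → ℤ → ℤ → W) : Prop :=
  ∀ w, ∃ N : ℤ, ∀ m n : ℤ, (m < N ∨ n < N) → F w m n = 0

/-- multiplication of a raw two-variable series by `p(x₁,x₂) ∈ ℂ[[x₁,x₂]]`. -/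
def ps2Smul (p : MvPowerSeries (Fin 2) ℂ) (F : W → ℤ → ℤ → W) : W → ℤ → ℤ → W :=
  fun w m n => ∑ᶠ ab : ℕ × ℕ,
    (MvPowerSeries.coeff (R := ℂ) (idx2 ab.1 ab.2) p) • F w (m - ab.1) (n - ab.2)

/-- multiplication of a raw series in `(z, x)` by `s ∈ ℂ((x))[[z]]`
(first index: exponent of `z`; second: exponent of `x`). -/
def lzSmul (s : LZ) (F : W → ℤ → ℤ → W) : W → ℤ → ℤ → W :=
  fun w n j => ∑ᶠ ab : ℕ × ℤ, lzCoeff s ab.1 ab.2 • F w (n - ab.1) (j - ab.2)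

/-- substitution `x₁ = φ(x,z)` into a raw two-variable series `F(x₁, x₂)` (with `x₂` renamed
to `x`); the result is indexed by (exponent of `z`, exponent of `x`). -/
def substX1 (φ : LZ) (F : W → ℤ → ℤ → W) : W → ℤ → ℤ → W :=
  fun w n j =>
    if 0 ≤ n then
      ∑ᶠ mk : ℤ × ℤ, lzCoeff (zpowR φ mk.1) n.toNat (j - mk.2) • F w mk.1 mk.2
    else 0

/-- `Y_ℰ^φ(a(x),z)b(x)`, as a raw series (first index: exponent of `z`; second: exponent
of `x`): the unique element `Y` of `ℰ(W)((z))` with `p(φ(x,z),x)·Y = (p(x₁,x)a(x₁)b(x))|_{x₁=φ(x,z)}`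
for a (any) modifier `p` as in the definition of φ-quasi compatibility; junk `0` if none exists. -/
def Yφ (φ : LZ) (a b : EW W) : W → ℤ → ℤ → W :=
  if h : ∃ Y : W → ℤ → ℤ → W,
      (∃ n₀ : ℤ, ∀ w n j, n < n₀ → Y w n j = 0) ∧
      (∀ n : ℤ, ∃ c : EW W, ∀ w j, (c w).coeff j = Y w n j) ∧
      ∃ p : MvPowerSeries (Fin 2) ℂ, substMv p φ ≠ 0 ∧ IsLT2 (ps2Smul p (c2 a b)) ∧
        lzSmul (substMv p φ) Y = substX1 φ (ps2Smul p (c2 a b))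
  then h.choose else fun _ _ _ => 0

/-- the coefficient of `z^n` in `Y_ℰ^φ(a(x),z)b(x)`, as an element of `ℰ(W)`. -/
def YatZ (φ : LZ) (a b : EW W) (n : ℤ) : EW W :=
  mkEW fun w j => Yφ φ a b w n j

/-- `a(x)_n^φ b(x)`, the coefficient of `z^{-n-1}` in `Y_ℰ^φ(a(x),z)b(x)`. -/
def YφCoef (φ : LZ) (a b : EW W) (n : ℤ) : EW W := YatZ φ a b (-n-1)

/-- the ordered pair `(a(x),b(x))` is φ-quasi compatible. -/
def PairQC (φ : LZ) (a b : EW W) : Prop :=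
  ∃ p : MvPowerSeries (Fin 2) ℂ, substMv p φ ≠ 0 ∧ IsLT2 (ps2Smul p (c2 a b))

/-- the ordered pair `(a(x),b(x))` is quasi compatible. -/
def PairQuasiCompat (a b : EW W) : Prop :=
  ∃ p : MvPowerSeries (Fin 2) ℂ, p ≠ 0 ∧ IsLT2 (ps2Smul p (c2 a b))

/-- the raw coefficient function of the product `a₁(x₁)⋯a_r(x_r)` applied to `w`. -/
def prodCoeff : (r : ℕ) → (Fin r → EW W) → (Fin r → ℤ) → W → W
  | 0, _, _, w => w
  | r+1, as, ms, w =>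
      ((as 0) (prodCoeff r (fun i => as i.succ) (fun i => ms i.succ) w)).coeff (ms 0)

/-- multiplication of a raw `r`-variable series by `P ∈ ℂ[[x₁,…,x_r]]`. -/
def mvSmul {r : ℕ} (P : MvPowerSeries (Fin r) ℂ) (F : (Fin r → ℤ) → W) :
    (Fin r → ℤ) → W :=
  fun m => ∑ᶠ k : Fin r →₀ ℕ, MvPowerSeries.coeff (R := ℂ) k P • F (fun i => m i - k i)

/-- the series `p(x_i, x_j) ∈ ℂ[[x₁,…,x_r]]` obtained from `p(x₁,x₂) ∈ ℂ[[x₁,x₂]]`. -/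
def pPair {r : ℕ} (p : MvPowerSeries (Fin 2) ℂ) (i j : Fin r) : MvPowerSeries (Fin r) ℂ :=
  fun k => if ∀ l, l ≠ i → l ≠ j → k l = 0 then MvPowerSeries.coeff (R := ℂ) (idx2 (k i) (k j)) p else 0

/-- the product `Π_{1 ≤ i < j ≤ r} p(x_i,x_j) ∈ ℂ[[x₁,…,x_r]]`. -/
def bigP (r : ℕ) (p : MvPowerSeries (Fin 2) ℂ) : MvPowerSeries (Fin r) ℂ :=
  ∏ ij ∈ Finset.univ.filter (fun ij : Fin r × Fin r => ij.1 < ij.2), pPair p ij.1 ij.2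

/-- a raw `r`-variable series `W → W[[x₁^{±1},…,x_r^{±1}]]` lies in `Hom(W, W((x₁,…,x_r)))`. -/
def IsLTrunc {r : ℕ} (F : W → (Fin r → ℤ) → W) : Prop :=
  ∀ w, ∃ N : ℤ, ∀ m : Fin r → ℤ, (∃ i, m i < N) → F w m = 0

/-- the finite sequence `as` in `ℰ(W)` is φ-quasi compatible. -/
def SeqQC (φ : LZ) {r : ℕ} (as : Fin r → EW W) : Prop :=
  ∃ p : MvPowerSeries (Fin 2) ℂ, substMv p φ ≠ 0 ∧
    IsLTrunc (fun w => mvSmul (bigP r p) (fun m => prodCoeff r as m w))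

/-- the finite sequence `as` in `ℰ(W)` is quasi compatible. -/
def SeqQuasiCompat {r : ℕ} (as : Fin r → EW W) : Prop :=
  ∃ p : MvPowerSeries (Fin 2) ℂ, p ≠ 0 ∧
    IsLTrunc (fun w => mvSmul (bigP r p) (fun m => prodCoeff r as m w))

/-- the finite sequence `as` in `ℰ(W)` is compatible (modifier `(x₁-x₂)^k`). -/
def SeqCompat {r : ℕ} (as : Fin r → EW W) : Prop :=
  ∃ k : ℕ,
    IsLTrunc (fun w => mvSmul (bigP r ((MvPowerSeries.X 0 - MvPowerSeries.X 1) ^ k))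
      (fun m => prodCoeff r as m w))

/-- a subset of `ℰ(W)` is φ-quasi compatible. -/
def SetQC (φ : LZ) (U : Set (EW W)) : Prop :=
  ∀ (r : ℕ) (as : Fin r → EW W), (∀ i, as i ∈ U) → SeqQC φ as

/-- a subset of `ℰ(W)` is quasi compatible. -/
def SetQuasiCompat (U : Set (EW W)) : Prop :=
  ∀ (r : ℕ) (as : Fin r → EW W), (∀ i, as i ∈ U) → SeqQuasiCompat as

/-- a subset of `ℰ(W)` is compatible. -/
def SetCompat (U : Set (EW W)) : Prop :=
  ∀ (r : ℕ) (as : Fin r → EW W), (∀ i, as i ∈ U) → SeqCompat as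

/-- a subspace `V ⊆ ℰ(W)` is `Y_ℰ^φ`-closed. -/
def YClosed (φ : LZ) (V : Submodule ℂ (EW W)) : Prop :=
  ∀ a ∈ V, ∀ b ∈ V, ∀ n : ℤ, YφCoef φ a b n ∈ V

/-- the raw coefficient function of `a(φ(x,z))` (first index: exponent of `z`;
second: exponent of `x`). -/
def substAphi (φ : LZ) (a : EW W) : W → ℤ → ℤ → W :=
  fun w n j =>
    if 0 ≤ n then ∑ᶠ m : ℤ, lzCoeff (zpowR φ m) n.toNat j • (a w).coeff m else 0


/-! ### Auxiliary development -/

namespace YVaux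

open Function HahnSeries

lemma isPWO_of_bound {s : Set ℤ} (N : ℤ) (h : ∀ x ∈ s, N ≤ x) : s.IsPWO := by
  rw [Set.isPWO_iff_isWF]
  exact BddBelow.wellFoundedOn_lt ⟨N, fun x hx => h x hx⟩

lemma coeff_bound {V : Type*} [AddCommGroup V] (u : HahnSeries ℤ V) :
    ∃ N : ℤ, ∀ j < N, u.coeff j = 0 :=
  ⟨u.order, fun _ hj => HahnSeries.coeff_eq_zero_of_lt_order hj⟩

/-- build a Hahn series over `ℤ` from a coefficient function vanishing below `N`. -/
def hmk {V : Type*} [Zero V] (f : ℤ → V) (N : ℤ) (h : ∀ j < N, f j = 0) : HahnSeries ℤ V :=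
  ⟨f, isPWO_of_bound N (fun x hx => le_of_not_gt (fun hl => hx (h x hl)))⟩

@[simp] lemma hmk_coeff {V : Type*} [Zero V] (f : ℤ → V) (N : ℤ) (h : ∀ j < N, f j = 0) :
    (hmk f N h).coeff = f := rfl

lemma LZ_ext {f g : LZ} (h : ∀ n j, lzCoeff f n j = lzCoeff g n j) : f = g :=
  PowerSeries.ext fun n => HahnSeries.coeff_injective (funext (h n))

lemma lzCoeff_one (n : ℕ) (j : ℤ) :
    lzCoeff (1 : LZ) n j = if n = 0 ∧ j = 0 then 1 else 0 := by
  unfold lzCoeff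
  rw [PowerSeries.coeff_one]
  by_cases hn : n = 0 <;> simp [hn, HahnSeries.coeff_one]

lemma one_eq_single : (1 : L) = HahnSeries.single (0:ℤ) 1 := by
  apply HahnSeries.coeff_injective; funext j
  simp [HahnSeries.coeff_one, HahnSeries.coeff_single]

lemma Xl_ne_zero : Xl ≠ 0 := HahnSeries.single_ne_zero one_ne_zero

lemma Xl_zpow : ∀ m : ℤ, (Xl : L) ^ m = HahnSeries.single m 1 := by
  have hpow : ∀ n : ℕ, (Xl : L) ^ n = HahnSeries.single (n:ℤ) 1 := by
    intro n; induction n with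
    | zero => simpa using one_eq_single.symm
    | succ k ih =>
        rw [pow_succ, ih, Xl, HahnSeries.single_mul_single, mul_one]
        norm_num
  intro m
  cases m with
  | ofNat n => simpa using hpow n
  | negSucc n =>
      have : ((n:ℤ)+1) = ((n+1 : ℕ) : ℤ) := by push_cast; ring
      rw [Int.negSucc_eq, zpow_neg, this, zpow_natCast, hpow]
      refine inv_eq_of_mul_eq_one_right ?_
      rw [HahnSeries.single_mul_single, mul_one, one_eq_single]
      congr 1
      push_cast; ring

section Zpow

variable {φ : LZ}

lemma isUnit_of_cc (hc : (PowerSeries.constantCoeff (R := L)) φ = Xl) : IsUnit φ :=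
  PowerSeries.isUnit_iff_constantCoeff.mpr (by rw [hc]; exact (isUnit_iff_ne_zero).mpr Xl_ne_zero)

lemma zpowR_unit (u : LZˣ) (m : ℤ) : zpowR (u : LZ) m = ((u ^ m : LZˣ) : LZ) := by
  unfold zpowR
  split
  · rename_i h
    rw [← Units.val_pow_eq_pow_val, ← zpow_natCast, Int.toNat_of_nonneg h]
  · rename_i h
    rw [Ring.inverse_unit, ← Units.val_pow_eq_pow_val]
    congr 1
    rw [inv_pow, ← zpow_natCast, Int.toNat_of_nonneg (by omega), ← zpow_neg, neg_neg]

lemma zpowR_add (hu : IsUnit φ) (m m' : ℤ) :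
    zpowR φ (m + m') = zpowR φ m * zpowR φ m' := by
  obtain ⟨u, rfl⟩ := hu
  rw [zpowR_unit, zpowR_unit, zpowR_unit, zpow_add, Units.val_mul]

lemma zpowR_natCast (g : LZ) (α : ℕ) : zpowR g (α : ℤ) = g ^ α := by
  unfold zpowR
  rw [if_pos (Int.natCast_nonneg α), Int.toNat_natCast]

lemma zpowR_zero' (g : LZ) : zpowR g 0 = 1 := by
  simpa using zpowR_natCast g 0

lemma constantCoeff_zpowR (hu : IsUnit φ) (m : ℤ) :
    (PowerSeries.constantCoeff (R := L)) (zpowR φ m) = ((PowerSeries.constantCoeff (R := L)) φ) ^ m := by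
  obtain ⟨u, rfl⟩ := hu
  rw [zpowR_unit]
  calc (PowerSeries.constantCoeff (R := L)) ((u ^ m : LZˣ) : LZ)
      = ((Units.map (PowerSeries.constantCoeff (R := L)) (u ^ m) : Lˣ) : L) := rfl
    _ = ((Units.map (PowerSeries.constantCoeff (R := L)) u ^ m : Lˣ) : L) := by rw [map_zpow]
    _ = ((Units.map (PowerSeries.constantCoeff (R := L)) u : Lˣ) : L) ^ m := by
        rw [Units.val_zpow_eq_zpow_val]
    _ = _ := rfl

lemma lzCoeff_zpowR_zero (hc : (PowerSeries.constantCoeff (R := L)) φ = Xl) (m j : ℤ) :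
    lzCoeff (zpowR φ m) 0 j = if j = m then 1 else 0 := by
  unfold lzCoeff
  rw [PowerSeries.coeff_zero_eq_constantCoeff, constantCoeff_zpowR (isUnit_of_cc hc), hc,
    Xl_zpow, HahnSeries.coeff_single]
  split <;> simp

end Zpow


section Mul

lemma coeff_sum {V : Type*} [AddCommMonoid V] {ι : Type*} (s : Finset ι)
    (F : ι → HahnSeries ℤ V) (j : ℤ) :
    (∑ i ∈ s, F i).coeff j = ∑ i ∈ s, (F i).coeff j := by
  classical
  induction s using Finset.induction with
  | empty => simp
  | insert a t hne ih => simp [Finset.sum_insert hne, ih]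

lemma hahn_mul_coeff (u v : L) (j : ℤ) :
    (u * v).coeff j = ∑ᶠ B : ℤ, u.coeff B * v.coeff (j - B) := by
  classical
  rw [HahnSeries.coeff_mul]
  rw [finsum_eq_sum_of_support_subset _
    (s := (Finset.addAntidiagonal u.isPWO_support v.isPWO_support j).image Prod.fst) ?hsub]
  case hsub =>
    intro B hB
    simp only [Function.mem_support] at hB
    have hu : u.coeff B ≠ 0 := fun h => hB (by rw [h, zero_mul])
    have hv : v.coeff (j - B) ≠ 0 := fun h => hB (by rw [h, mul_zero])
    simp only [Finset.coe_image, Set.mem_image, Finset.mem_coe, Finset.mem_addAntidiagonal]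
    exact ⟨(B, j - B), Finset.mem_addAntidiagonal.mpr ⟨hu, hv, by ring⟩, rfl⟩
  rw [Finset.sum_image ?hinj]
  case hinj =>
    intro x hx y hy hxy
    rw [Finset.mem_coe] at hx hy
    replace hx := Finset.mem_addAntidiagonal.mp hx
    replace hy := Finset.mem_addAntidiagonal.mp hy
    have : x.2 = y.2 := by omega
    exact Prod.ext hxy this
  apply Finset.sum_congr rfl
  intro ij hij
  rw [Finset.mem_addAntidiagonal] at hij
  obtain ⟨-, -, h3⟩ := hij
  have h4 : ij.2 = j - ij.1 := by omega
  rw [h4]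

lemma lzCoeff_mul (f g : LZ) (n : ℕ) (j : ℤ) :
    lzCoeff (f * g) n j =
      ∑ p ∈ Finset.HasAntidiagonal.antidiagonal n, ∑ᶠ B : ℤ, lzCoeff f p.1 B * lzCoeff g p.2 (j - B) := by
  unfold lzCoeff
  rw [PowerSeries.coeff_mul, coeff_sum]
  exact Finset.sum_congr rfl fun p _ => hahn_mul_coeff _ _ _

end Mul

section Bnd

/-- uniform lower bound on orders of the first `n+1` `z`-coefficients. -/
def Bnd (n : ℕ) (c : ℤ) (g : LZ) (e : ℤ) : Prop :=
  ∀ k : ℕ, k ≤ n → ∀ j : ℤ, j < e + k * c → lzCoeff g k j = 0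

lemma Bnd.mono {n c c' g e} (h : Bnd n c g e) (hc : c' ≤ c) : Bnd n c' g e := by
  intro k hk j hj
  refine h k hk j (lt_of_lt_of_le hj ?_)
  have : (k:ℤ) * c' ≤ (k:ℤ) * c := mul_le_mul_of_nonneg_left hc (Int.natCast_nonneg k)
  omega

lemma Bnd.one (n : ℕ) (c : ℤ) : Bnd n c (1 : LZ) 0 := by
  intro k hk j hj
  rw [lzCoeff_one]
  rw [if_neg]
  rintro ⟨rfl, rfl⟩
  simp at hj

lemma Bnd.mul {n c e f} {g h : LZ} (hc : c ≤ 0) (hg : Bnd n c g e) (hh : Bnd n c h f) :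
    Bnd n c (g * h) (e + f) := by
  intro k hk j hj
  rw [lzCoeff_mul]
  apply Finset.sum_eq_zero
  intro p hp
  rw [Finset.HasAntidiagonal.mem_antidiagonal] at hp
  apply finsum_eq_zero_of_forall_eq_zero
  intro B
  by_cases hB : B < e + p.1 * c
  · rw [hg p.1 (by omega) B hB, zero_mul]
  · push_neg at hB
    have hcast : ((k : ℤ)) * c = (p.1 : ℤ) * c + (p.2 : ℤ) * c := by
      rw [← hp]; push_cast; ring
    have : j - B < f + p.2 * c := by linarith [hj, hB, hcast.le, hcast.ge]
    rw [hh p.2 (by omega) _ this, mul_zero]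

variable {φ : LZ}

lemma exists_c (hcφ : (PowerSeries.constantCoeff (R := L)) φ = Xl) (n : ℕ) :
    ∃ c : ℤ, c ≤ 0 ∧ Bnd n c φ 1 ∧ Bnd n c (Ring.inverse φ) (-1) := by
  have hφ0 : ∀ j : ℤ, j < 1 → lzCoeff φ 0 j = 0 := by
    intro j hj
    have := lzCoeff_zpowR_zero hcφ 1 j
    rw [show zpowR φ 1 = φ by simpa using zpowR_natCast φ 1] at this
    rw [this, if_neg (by omega)]
  have hinv0 : ∀ j : ℤ, j < -1 → lzCoeff (Ring.inverse φ) 0 j = 0 := by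
    intro j hj
    have hz : zpowR φ (-1) = Ring.inverse φ := by
      unfold zpowR; rw [if_neg (by omega)]; norm_num
    have := lzCoeff_zpowR_zero hcφ (-1) j
    rw [hz] at this
    rw [this, if_neg (by omega)]
  induction n with
  | zero =>
      refine ⟨0, le_refl _, ?_, ?_⟩
      · intro k hk j hj
        interval_cases k
        exact hφ0 j (by omega)
      · intro k hk j hj
        interval_cases k
        exact hinv0 j (by omega)
  | succ n ih =>
      obtain ⟨c, hc0, h1, h2⟩ := ih
      obtain ⟨N1, hN1⟩ := coeff_bound ((PowerSeries.coeff (R := L) (n+1)) φ)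
      obtain ⟨N2, hN2⟩ := coeff_bound ((PowerSeries.coeff (R := L) (n+1)) (Ring.inverse φ))
      set c' := min c (min (N1 - 1) (N2 + 1)) with hc'
      have hc'0 : c' ≤ 0 := le_trans (min_le_left _ _) hc0
      have hc'c : c' ≤ c := min_le_left _ _
      refine ⟨c', hc'0, ?_, ?_⟩
      · intro k hk j hj
        rcases Nat.lt_or_ge k (n+1) with hlt | hge
        · exact (h1.mono hc'c) k (by omega) j hj
        · have hkk : k = n + 1 := by omega
          subst hkk
          apply hN1
          have h1' : ((n+1:ℕ):ℤ) * c' ≤ 1 * c' :=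
            mul_le_mul_of_nonpos_right (by push_cast; omega) hc'0
          have h2' : c' ≤ N1 - 1 := le_trans (min_le_right _ _) (min_le_left _ _)
          linarith
      · intro k hk j hj
        rcases Nat.lt_or_ge k (n+1) with hlt | hge
        · exact (h2.mono hc'c) k (by omega) j hj
        · have hkk : k = n + 1 := by omega
          subst hkk
          apply hN2
          have h1' : ((n+1:ℕ):ℤ) * c' ≤ 1 * c' :=
            mul_le_mul_of_nonpos_right (by push_cast; omega) hc'0
          have h2' : c' ≤ N2 + 1 := le_trans (min_le_right _ _) (min_le_right _ _)
          linarith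

lemma Bnd_zpowR (hcφ : (PowerSeries.constantCoeff (R := L)) φ = Xl) (n : ℕ) :
    ∃ c : ℤ, c ≤ 0 ∧ ∀ m : ℤ, Bnd n c (zpowR φ m) m := by
  obtain ⟨c, hc0, h1, h2⟩ := exists_c hcφ n
  refine ⟨c, hc0, ?_⟩
  have hpow : ∀ α : ℕ, Bnd n c (φ ^ α) α := by
    intro α; induction α with
    | zero => simpa using Bnd.one n c
    | succ β ih =>
        have h := Bnd.mul hc0 ih h1
        rw [← pow_succ] at h
        have he : ((β+1:ℕ):ℤ) = (β:ℤ) + 1 := by push_cast; ring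
        rw [he]; exact h
  have hpowinv : ∀ α : ℕ, Bnd n c ((Ring.inverse φ) ^ α) (-(α:ℤ)) := by
    intro α; induction α with
    | zero => simpa using Bnd.one n c
    | succ β ih =>
        have h := Bnd.mul hc0 ih h2
        rw [← pow_succ] at h
        have he : (-((β+1:ℕ):ℤ)) = -(β:ℤ) + -1 := by push_cast; ring
        rw [he]; exact h
  intro m
  unfold zpowR
  split
  · rename_i h
    have := hpow m.toNat
    rwa [Int.toNat_of_nonneg h] at this
  · rename_i h
    have := hpowinv (-m).toNat
    rwa [Int.toNat_of_nonneg (by omega), neg_neg] at this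

lemma zpow_vanish (hcφ : (PowerSeries.constantCoeff (R := L)) φ = Xl) (n : ℕ) :
    ∃ c : ℤ, c ≤ 0 ∧ ∀ (m : ℤ) (k : ℕ), k ≤ n → ∀ j : ℤ,
      j < m + n * c → lzCoeff (zpowR φ m) k j = 0 := by
  obtain ⟨c, hc0, h⟩ := Bnd_zpowR hcφ n
  refine ⟨c, hc0, fun m k hk j hj => h m k hk j (lt_of_lt_of_le hj ?_)⟩
  have : (n:ℤ) * c ≤ (k:ℤ) * c := mul_le_mul_of_nonpos_right (by push_cast; omega) hc0
  omega

end Bnd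


section Mk

lemma mkLZ_eq (c : ℕ → ℤ → ℂ) (g : LZ) (h : ∀ n j, lzCoeff g n j = c n j) : mkLZ c = g := by
  unfold mkLZ
  rw [dif_pos ⟨g, h⟩]
  have hs := (⟨g, h⟩ : ∃ g : LZ, ∀ n j, lzCoeff g n j = c n j).choose_spec
  exact LZ_ext (fun n j => by rw [hs n j, h n j])

variable {W : Type} [AddCommGroup W] [Module ℂ W]

lemma mkEW_eq (c : W → ℤ → W) (g : EW W) (h : ∀ w j, (g w).coeff j = c w j) : mkEW c = g := by
  unfold mkEW
  rw [dif_pos ⟨g, h⟩]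
  have hs := (⟨g, h⟩ : ∃ g : EW W, ∀ w j, (g w).coeff j = c w j).choose_spec
  refine LinearMap.ext fun w => HahnSeries.coeff_injective (funext fun j => ?_)
  rw [hs w j, h w j]

/-- `w ↦ w x⁰` as a linear map. -/
def one0 : EW W where
  toFun w := HahnSeries.single 0 w
  map_add' w w' := by
    apply HahnSeries.coeff_injective; funext j
    by_cases hj : j = 0 <;>
      simp [HahnSeries.coeff_single, hj]
  map_smul' r w := by
    apply HahnSeries.coeff_injective; funext j
    by_cases hj : j = 0 <;>
      simp [HahnSeries.coeff_single, hj]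

lemma oneEW_eq : (oneEW : EW W) = one0 :=
  mkEW_eq _ one0 (fun w j => by simp [one0, HahnSeries.coeff_single])

lemma oneEW_coeff (w : W) (j : ℤ) :
    ((oneEW : EW W) w).coeff j = if j = 0 then w else 0 := by
  rw [oneEW_eq]; simp [one0, HahnSeries.coeff_single]

end Mk

section Idx2

lemma idx2_fst (α β : ℕ) : (idx2 α β) 0 = α := by
  simp [idx2, Finsupp.single_apply]

lemma idx2_snd (α β : ℕ) : (idx2 α β) 1 = β := by
  simp [idx2, Finsupp.single_apply]

lemma coeff_one_idx2 (α β : ℕ) :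
    MvPowerSeries.coeff (R := ℂ) (idx2 α β) 1 = if α = 0 ∧ β = 0 then 1 else 0 := by
  classical
  rw [MvPowerSeries.coeff_one]
  by_cases h : α = 0 ∧ β = 0
  · obtain ⟨rfl, rfl⟩ := h
    rw [if_pos (show idx2 0 0 = 0 by simp [idx2]), if_pos ⟨rfl, rfl⟩]
  · rw [if_neg, if_neg h]
    intro h0
    refine h ⟨?_, ?_⟩
    · rw [← idx2_fst α β, h0]; rfl
    · rw [← idx2_snd α β, h0]; rfl

end Idx2

section FinsumHelp

lemma finsum_prod_fst {α β M : Type*} [AddCommMonoid M] (f : α × β → M) (a₀ : α)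
    (h : ∀ p : α × β, f p ≠ 0 → p.1 = a₀) : ∑ᶠ p, f p = ∑ᶠ b, f (a₀, b) := by
  rw [← finsum_mem_univ f,
    finsum_mem_inter_support_eq f Set.univ (Set.range (fun b : β => (a₀, b))) ?heq]
  · exact finsum_mem_range (fun b b' hb => congrArg Prod.snd hb)
  case heq =>
    ext p
    simp only [Set.mem_inter_iff, Set.mem_univ, true_and, Function.mem_support, Set.mem_range]
    constructor
    · intro hp
      exact ⟨⟨p.2, by rw [← h p hp]⟩, hp⟩
    · exact fun hp => hp.2

lemma finsum_prod_snd {α β M : Type*} [AddCommMonoid M] (f : α × β → M) (b₀ : β)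
    (h : ∀ p : α × β, f p ≠ 0 → p.2 = b₀) : ∑ᶠ p, f p = ∑ᶠ a, f (a, b₀) := by
  have h0 : ∑ᶠ (q : β × α), f (q.2, q.1) = ∑ᶠ p, f p :=
    finsum_comp_equiv (Equiv.prodComm β α)
  have h1 := finsum_prod_fst (fun q : β × α => f (q.2, q.1)) b₀
    (fun q hq => h (q.2, q.1) hq)
  rw [← h0, h1]

end FinsumHelp

section C2

variable {W : Type} [AddCommGroup W] [Module ℂ W] (a b : EW W)

lemma c2_one_left (w : W) (m n : ℤ) :
    c2 oneEW b w m n = if m = 0 then (b w).coeff n else 0 := by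
  unfold c2
  rw [oneEW_coeff]

lemma c2_one_right (w : W) (m n : ℤ) :
    c2 a oneEW w m n = if n = 0 then (a w).coeff m else 0 := by
  unfold c2
  rw [oneEW_coeff]
  by_cases hn : n = 0
  · rw [if_pos hn, if_pos hn]
  · rw [if_neg hn, if_neg hn, map_zero, HahnSeries.coeff_zero]

lemma ps2Smul_one (F : W → ℤ → ℤ → W) : ps2Smul 1 F = F := by
  funext w m n
  unfold ps2Smul
  rw [finsum_eq_single _ ((0, 0) : ℕ × ℕ) ?hz]
  · rw [coeff_one_idx2, if_pos ⟨rfl, rfl⟩, one_smul]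
    norm_num
  case hz =>
    intro ab hab
    rw [coeff_one_idx2, if_neg, zero_smul]
    intro ⟨h1, h2⟩
    exact hab (Prod.ext h1 h2)

lemma lzSmul_one (Y : W → ℤ → ℤ → W) : lzSmul 1 Y = Y := by
  funext w n j
  unfold lzSmul
  rw [finsum_eq_single _ ((0, 0) : ℕ × ℤ) ?hz]
  · rw [lzCoeff_one, if_pos ⟨rfl, rfl⟩, one_smul]
    norm_num
  case hz =>
    intro ab hab
    rw [lzCoeff_one, if_neg, zero_smul]
    intro ⟨h1, h2⟩
    exact hab (Prod.ext h1 h2)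

lemma isLT2_one_left : IsLT2 (ps2Smul 1 (c2 oneEW b)) := by
  rw [ps2Smul_one]
  intro w
  obtain ⟨N, hN⟩ := coeff_bound (b w)
  refine ⟨min N 0, fun m n h => ?_⟩
  rw [c2_one_left]
  rcases h with h | h
  · rw [if_neg (by omega)]
  · by_cases hm : m = 0
    · rw [if_pos hm, hN n (by omega)]
    · rw [if_neg hm]

lemma isLT2_one_right : IsLT2 (ps2Smul 1 (c2 a oneEW)) := by
  rw [ps2Smul_one]
  intro w
  obtain ⟨N, hN⟩ := coeff_bound (a w)
  refine ⟨min N 0, fun m n h => ?_⟩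
  rw [c2_one_right]
  rcases h with h | h
  · by_cases hn : n = 0
    · rw [if_pos hn, hN m (by omega)]
    · rw [if_neg hn]
  · rw [if_neg (by omega)]

end C2

section SubstMvOne

lemma substMv_one (φ : LZ) : substMv 1 φ = 1 := by
  unfold substMv
  apply mkLZ_eq
  intro n j
  rw [finsum_eq_single _ ((0, 0) : ℕ × ℕ) ?hz]
  · rw [coeff_one_idx2, if_pos ⟨rfl, rfl⟩, one_mul]
    norm_num
  case hz =>
    intro ab hab
    rw [coeff_one_idx2, if_neg, zero_mul]
    intro ⟨h1, h2⟩
    exact hab (Prod.ext h1 h2)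

lemma substMv_one_ne (φ : LZ) : substMv 1 φ ≠ 0 := by
  rw [substMv_one]
  exact one_ne_zero

end SubstMvOne


section SubstX1One

variable {W : Type} [AddCommGroup W] [Module ℂ W] (φ : LZ) (a b : EW W)

lemma substX1_one_left :
    substX1 φ (c2 oneEW b) = fun w n j => if n = 0 then (b w).coeff j else 0 := by
  funext w n j
  unfold substX1
  by_cases hn : 0 ≤ n
  · rw [if_pos hn]
    rw [finsum_eq_single _ ((0, j) : ℤ × ℤ) ?hz]
    · rw [c2_one_left, if_pos rfl, zpowR_zero', lzCoeff_one, sub_self]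
      by_cases h0 : n = 0
      · subst h0
        norm_num
      · have hne : n.toNat ≠ 0 := by omega
        rw [if_neg (by tauto), if_neg h0, zero_smul]
    case hz =>
      intro mk hmk
      rw [c2_one_left]
      by_cases hm : mk.1 = 0
      · have hk : mk.2 ≠ j := fun h => hmk (Prod.ext hm h)
        rw [hm, zpowR_zero', lzCoeff_one, if_neg (by
          rintro ⟨-, h2⟩
          exact hk (by omega)), zero_smul]
      · rw [if_neg hm, smul_zero]
  · rw [if_neg hn, if_neg (by omega)]

lemma substX1_one_right :
    substX1 φ (c2 a oneEW) = substAphi φ a := by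
  funext w n j
  unfold substX1 substAphi
  by_cases hn : 0 ≤ n
  · rw [if_pos hn, if_pos hn]
    rw [finsum_prod_snd _ (0 : ℤ) ?hz]
    · apply finsum_congr
      intro m
      rw [c2_one_right, if_pos rfl, sub_zero]
    case hz =>
      intro mk hmk
      by_contra hne
      apply hmk
      rw [c2_one_right, if_neg hne, smul_zero]
  · rw [if_neg hn, if_neg hn]

end SubstX1One

section ASlice

variable {W : Type} [AddCommGroup W] [Module ℂ W]

/-- the `z^N`-coefficient function of `a(φ(x,z))`. -/
def sA (φ : LZ) (a : EW W) (N : ℕ) (w : W) (j : ℤ) : W :=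
  ∑ᶠ m : ℤ, lzCoeff (zpowR φ m) N j • (a w).coeff m

variable (φ : LZ) (a : EW W) {D : ℤ}

lemma sA_spec (hcφ : (PowerSeries.constantCoeff (R := L)) φ = Xl) (N : ℕ) :
    ∃ c : ℤ, c ≤ 0 ∧ ∀ (m : ℤ) (j : ℤ), j < m + N * c → lzCoeff (zpowR φ m) N j = 0 := by
  obtain ⟨c, hc0, h⟩ := zpow_vanish hcφ N
  exact ⟨c, hc0, fun m j hj => h m N le_rfl j hj⟩

lemma sA_eq_sum {N : ℕ} (hc : ∀ (m : ℤ) (j : ℤ), j < m + D → lzCoeff (zpowR φ m) N j = 0)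
    (w : W) {Ma : ℤ} (hMa : ∀ m < Ma, (a w).coeff m = 0) (j : ℤ) :
    sA φ a N w j = ∑ m ∈ Finset.Icc Ma (j - D), lzCoeff (zpowR φ m) N j • (a w).coeff m := by
  unfold sA
  apply finsum_eq_sum_of_support_subset
  intro m hm
  simp only [Function.mem_support] at hm
  have h1 : (a w).coeff m ≠ 0 := fun h => hm (by rw [h, smul_zero])
  have h2 : lzCoeff (zpowR φ m) N j ≠ 0 := fun h => hm (by rw [h, zero_smul])
  simp only [Finset.coe_Icc, Set.mem_Icc]
  constructor
  · by_contra hlt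
    exact h1 (hMa m (by omega))
  · by_contra hlt
    exact h2 (hc m j (by omega))

lemma sA_vanish {N : ℕ} (hc : ∀ (m : ℤ) (j : ℤ), j < m + D → lzCoeff (zpowR φ m) N j = 0)
    (w : W) {Ma : ℤ} (hMa : ∀ m < Ma, (a w).coeff m = 0) (j : ℤ) (hj : j < Ma + D) :
    sA φ a N w j = 0 := by
  unfold sA
  apply finsum_eq_zero_of_forall_eq_zero
  intro m
  by_cases hm : m < Ma
  · rw [hMa m hm, smul_zero]
  · rw [hc m j (by omega), zero_smul]

/-- the `z^N`-coefficient of `a(φ(x,z))` as an element of `ℰ(W)`. -/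
def aSlice (N : ℕ)
    (hc : ∀ (m : ℤ) (j : ℤ), j < m + D → lzCoeff (zpowR φ m) N j = 0) :
    EW W where
  toFun w := hmk (fun j => sA φ a N w j) ((a w).order + D)
    (fun j hj => sA_vanish φ a hc w (fun m hm => HahnSeries.coeff_eq_zero_of_lt_order hm) j hj)
  map_add' w w' := by
    apply HahnSeries.coeff_injective; funext j
    set Ma : ℤ := min ((a (w + w')).order) (min ((a w).order) ((a w').order)) with hMadef
    have hb : ∀ v : W, Ma ≤ (a v).order → ∀ m < Ma, (a v).coeff m = 0 := fun v hv m hm =>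
      HahnSeries.coeff_eq_zero_of_lt_order (by omega)
    simp only [hmk_coeff, HahnSeries.coeff_add]
    rw [sA_eq_sum φ a hc w (hb w (by omega)) j,
      sA_eq_sum φ a hc w' (hb w' (by omega)) j,
      sA_eq_sum φ a hc (w + w') (hb (w + w') (by omega)) j,
      ← Finset.sum_add_distrib]
    apply Finset.sum_congr rfl
    intro m _
    rw [map_add, HahnSeries.coeff_add, smul_add]
  map_smul' r w := by
    apply HahnSeries.coeff_injective; funext j
    set Ma : ℤ := min ((a (r • w)).order) ((a w).order) with hMadef
    have hb : ∀ v : W, Ma ≤ (a v).order → ∀ m < Ma, (a v).coeff m = 0 := fun v hv m hm =>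
      HahnSeries.coeff_eq_zero_of_lt_order (by omega)
    simp only [hmk_coeff, RingHom.id_apply, HahnSeries.coeff_smul]
    rw [sA_eq_sum φ a hc w (hb w (by omega)) j,
      sA_eq_sum φ a hc (r • w) (hb (r • w) (by omega)) j,
      Finset.smul_sum]
    apply Finset.sum_congr rfl
    intro m _
    rw [map_smul, HahnSeries.coeff_smul, smul_comm]

lemma aSlice_coeff (N : ℕ)
    (hc : ∀ (m : ℤ) (j : ℤ), j < m + D → lzCoeff (zpowR φ m) N j = 0)
    (w : W) (j : ℤ) : ((aSlice φ a N hc) w).coeff j = sA φ a N w j := rfl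

end ASlice


section SubstMvCoeff

variable {φ : LZ}

lemma lzCoeff_mul_Cpow (g : LZ) (β : ℕ) (n : ℕ) (j : ℤ) :
    lzCoeff (g * (PowerSeries.C (R := L) Xl) ^ β) n j = lzCoeff g n (j - β) := by
  unfold lzCoeff
  rw [← map_pow, PowerSeries.coeff_mul_C]
  have hx : (Xl : L) ^ β = HahnSeries.single (β : ℤ) 1 := by
    rw [← zpow_natCast, Xl_zpow]
  rw [hx]
  have h := HahnSeries.coeff_mul_single_add (r := (1:ℂ)) (x := (PowerSeries.coeff (R := L) n) g)
    (a := j - (β:ℤ)) (b := (β:ℤ))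
  rw [sub_add_cancel] at h
  rw [h, mul_one]

lemma substMv_coeff {p : MvPowerSeries (Fin 2) ℂ} (hs : substMv p φ ≠ 0) (n : ℕ) (j : ℤ) :
    lzCoeff (substMv p φ) n j
      = ∑ᶠ ab : ℕ × ℕ, MvPowerSeries.coeff (R := ℂ) (idx2 ab.1 ab.2) p
          * lzCoeff (φ ^ ab.1) n (j - ab.2) := by
  unfold substMv mkLZ at hs ⊢
  by_cases h : ∃ g : LZ, ∀ (n : ℕ) (j : ℤ), lzCoeff g n j = ∑ᶠ ab : ℕ × ℕ,
      (MvPowerSeries.coeff (R := ℂ) (idx2 ab.1 ab.2)) p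
        * lzCoeff (φ ^ ab.1 * PowerSeries.C (R := L) Xl ^ ab.2) n j
  · rw [dif_pos h, h.choose_spec n j]
    exact finsum_congr fun ab => by rw [lzCoeff_mul_Cpow]
  · rw [dif_neg h] at hs
    exact absurd rfl hs

lemma substMv_lower {p : MvPowerSeries (Fin 2) ℂ} (hs : substMv p φ ≠ 0) {N : ℕ} {c : ℤ}
    (hgl : ∀ (m : ℤ) (k : ℕ), k ≤ N → ∀ j' : ℤ, j' < m + (N:ℤ) * c → lzCoeff (zpowR φ m) k j' = 0)
    (A : ℕ) (hA : A ≤ N) (B : ℤ) (hB : B < (N:ℤ) * c) : lzCoeff (substMv p φ) A B = 0 := by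
  rw [substMv_coeff hs]
  apply finsum_eq_zero_of_forall_eq_zero
  intro ab
  have h0 : lzCoeff (zpowR φ (ab.1 : ℤ)) A (B - ab.2) = 0 := by
    apply hgl _ _ hA
    have h1 : (0:ℤ) ≤ (ab.1 : ℤ) := Int.natCast_nonneg _
    have h2 : (0:ℤ) ≤ (ab.2 : ℤ) := Int.natCast_nonneg _
    linarith
  rw [zpowR_natCast] at h0
  rw [h0, mul_zero]

end SubstMvCoeff

section Indep1

variable {W : Type} [AddCommGroup W] [Module ℂ W] {φ : LZ}

lemma indep_left (hcφ : (PowerSeries.constantCoeff (R := L)) φ = Xl)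
    (p : MvPowerSeries (Fin 2) ℂ) (hs : substMv p φ ≠ 0) (b : EW W) :
    substX1 φ (ps2Smul p (c2 oneEW b)) =
      lzSmul (substMv p φ) (fun w n j => if n = 0 then (b w).coeff j else 0) := by
  classical
  funext w n j
  by_cases hn : 0 ≤ n
  case neg =>
    unfold substX1
    rw [if_neg hn]
    unfold lzSmul
    symm
    apply finsum_eq_zero_of_forall_eq_zero
    intro AB
    beta_reduce
    rw [if_neg (by omega), smul_zero]
  case pos =>
  set N : ℕ := n.toNat with hNdef
  have hNn : (N : ℤ) = n := Int.toNat_of_nonneg hn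
  obtain ⟨c, hc0, hgl⟩ := zpow_vanish hcφ N
  obtain ⟨Mb, hMb⟩ := coeff_bound (b w)
  set P : ℕ × ℕ → ℂ := fun ab => MvPowerSeries.coeff (R := ℂ) (idx2 ab.1 ab.2) p with hP
  set D : ℤ := (N:ℤ) * c with hD
  have hD0 : D ≤ 0 := mul_nonpos_of_nonneg_of_nonpos (Int.natCast_nonneg N) hc0
  have hDle : ∀ {k : ℕ}, k ≤ N → ∀ (m : ℤ) (j' : ℤ), j' < m + D →
      lzCoeff (zpowR φ m) k j' = 0 := fun {k} hk m j' h => hgl m k hk j' h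
  have hpow0 : ∀ (α : ℕ) (j' : ℤ), j' < (α:ℤ) + D → lzCoeff (φ ^ α) N j' = 0 := by
    intro α j' h
    have h0 := hDle le_rfl (α : ℤ) j' h
    rwa [zpowR_natCast] at h0
  set K : ℕ := (j - Mb - D).toNat + 1 with hK
  -- RHS computation
  have hRHS : lzSmul (substMv p φ)
        (fun w n j => if n = 0 then (b w).coeff j else 0) w n j
      = ∑ y ∈ Finset.Icc D (j - Mb) ×ˢ (Finset.range K ×ˢ Finset.range K),
          (P y.2 * lzCoeff (φ ^ y.2.1) N (y.1 - y.2.2)) • (b w).coeff (j - y.1) := by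
    refine Eq.trans ?_ (Finset.sum_product' (Finset.Icc D (j - Mb))
      (Finset.range K ×ˢ Finset.range K)
      (fun B ab => (P ab * lzCoeff (φ ^ ab.1) N (B - ab.2)) • (b w).coeff (j - B))).symm
    unfold lzSmul
    rw [finsum_prod_fst _ N ?hconc]
    case hconc =>
      intro q hq
      by_contra hne
      refine hq ?_
      beta_reduce
      rw [if_neg (by omega), smul_zero]
    have hn0 : n - (N:ℤ) = 0 := by omega
    beta_reduce
    rw [finsum_eq_sum_of_support_subset _ (s := Finset.Icc D (j - Mb)) ?hsupp]
    case hsupp =>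
      intro B hB
      simp only [Function.mem_support] at hB
      beta_reduce at hB
      rw [if_pos hn0] at hB
      have h1 : lzCoeff (substMv p φ) N B ≠ 0 := fun h => hB (by rw [h, zero_smul])
      have h2 : (b w).coeff (j - B) ≠ 0 := fun h => hB (by rw [h, smul_zero])
      have hBl : D ≤ B := by
        by_contra hlt
        exact h1 (substMv_lower hs hgl N le_rfl B (by omega))
      have hBu : B ≤ j - Mb := by
        by_contra hlt
        exact h2 (hMb _ (by omega))
      simp only [Finset.coe_Icc, Set.mem_Icc]
      exact ⟨hBl, hBu⟩
    apply Finset.sum_congr rfl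
    intro B hB
    rw [Finset.mem_Icc] at hB
    rw [if_pos hn0, substMv_coeff hs N B,
      finsum_eq_sum_of_support_subset _ (s := Finset.range K ×ˢ Finset.range K) ?hsub2,
      Finset.sum_smul]
    case hsub2 =>
      intro ab hab
      simp only [Function.mem_support] at hab
      have h1 : lzCoeff (φ ^ ab.1) N (B - ab.2) ≠ 0 := fun h => hab (by rw [h, mul_zero])
      have hge : (ab.1 : ℤ) + D ≤ B - ab.2 := by
        by_contra hlt
        exact h1 (hpow0 _ _ (by omega))
      have c1 : (ab.1:ℤ) ≤ j - Mb - D := by omega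
      have c2 : (ab.2:ℤ) ≤ j - Mb - D := by omega
      simp only [Finset.coe_product, Set.mem_prod, Finset.coe_range, Set.mem_Iio]
      omega
  -- LHS computation
  have hG : ∀ m k : ℤ, ps2Smul p (c2 oneEW b) w m k
      = ∑ᶠ ab : ℕ × ℕ, P ab • (if m - ab.1 = 0 then (b w).coeff (k - ab.2) else 0) := by
    intro m k
    unfold ps2Smul
    exact finsum_congr fun ab => by rw [c2_one_left]
  have hGneg : ∀ m k : ℤ, m < 0 → ps2Smul p (c2 oneEW b) w m k = 0 := by
    intro m k hm
    rw [hG]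
    exact finsum_eq_zero_of_forall_eq_zero fun ab => by rw [if_neg (by omega), smul_zero]
  have hGlow : ∀ m k : ℤ, k < Mb → ps2Smul p (c2 oneEW b) w m k = 0 := by
    intro m k hk
    rw [hG]
    apply finsum_eq_zero_of_forall_eq_zero
    intro ab
    by_cases h : m - ab.1 = 0
    · rw [if_pos h, hMb _ (by omega), smul_zero]
    · rw [if_neg h, smul_zero]
  have hLHS : substX1 φ (ps2Smul p (c2 oneEW b)) w n j
      = ∑ x ∈ (Finset.Icc (0:ℤ) (j - Mb - D) ×ˢ Finset.Icc Mb (j - D)) ×ˢ Finset.range K,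
          (P (x.1.1.toNat, x.2) * lzCoeff (φ ^ x.1.1.toNat) N (j - x.1.2))
            • (b w).coeff (x.1.2 - x.2) := by
    refine Eq.trans ?_ (Finset.sum_product'
      (Finset.Icc (0:ℤ) (j - Mb - D) ×ˢ Finset.Icc Mb (j - D)) (Finset.range K)
      (fun mk β => (P (mk.1.toNat, β) * lzCoeff (φ ^ mk.1.toNat) N (j - mk.2))
        • (b w).coeff (mk.2 - β))).symm
    unfold substX1
    rw [if_pos hn]
    rw [finsum_eq_sum_of_support_subset _
      (s := Finset.Icc (0:ℤ) (j - Mb - D) ×ˢ Finset.Icc Mb (j - D)) ?hs1]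
    case hs1 =>
      intro mk hmk
      simp only [Function.mem_support] at hmk
      have h1 : lzCoeff (zpowR φ mk.1) N (j - mk.2) ≠ 0 := fun h => hmk (by rw [h, zero_smul])
      have h2 : ps2Smul p (c2 oneEW b) w mk.1 mk.2 ≠ 0 := fun h => hmk (by rw [h, smul_zero])
      have hm0 : 0 ≤ mk.1 := by
        by_contra hlt
        exact h2 (hGneg _ _ (by omega))
      have hkM : Mb ≤ mk.2 := by
        by_contra hlt
        exact h2 (hGlow _ _ (by omega))
      have hup : mk.1 + D ≤ j - mk.2 := by
        by_contra hlt
        exact h1 (hDle le_rfl mk.1 _ (by omega))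
      simp only [Finset.coe_product, Set.mem_prod, Finset.coe_Icc, Set.mem_Icc]
      omega
    apply Finset.sum_congr rfl
    intro mk hmk
    simp only [Finset.mem_product, Finset.mem_Icc] at hmk
    have hm0 : 0 ≤ mk.1 := hmk.1.1
    rw [hG]
    rw [finsum_prod_fst _ (mk.1.toNat) ?hc2]
    case hc2 =>
      intro ab hab
      by_contra hne
      exact hab (by rw [if_neg (by omega), smul_zero])
    have hmt : mk.1 - (mk.1.toNat : ℤ) = 0 := by omega
    rw [finsum_eq_sum_of_support_subset _ (s := Finset.range K) ?hs3]
    case hs3 =>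
      intro β hβ
      simp only [Function.mem_support] at hβ
      rw [if_pos hmt] at hβ
      have h2 : (b w).coeff (mk.2 - β) ≠ 0 := fun h => hβ (by rw [h, smul_zero])
      have : Mb ≤ mk.2 - β := by
        by_contra hlt
        exact h2 (hMb _ (by omega))
      simp only [Finset.coe_range, Set.mem_Iio]
      have hk2 : mk.2 ≤ j - D := hmk.2.2
      omega
    rw [Finset.smul_sum]
    apply Finset.sum_congr rfl
    intro β _
    rw [if_pos hmt]
    have hzp : zpowR φ mk.1 = φ ^ mk.1.toNat := by
      unfold zpowR
      rw [if_pos hm0]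
    rw [hzp, smul_smul, mul_comm]
  -- put both sides together
  rw [hLHS, hRHS]
  rw [← Finset.sum_filter_ne_zero ((Finset.Icc (0:ℤ) (j - Mb - D) ×ˢ Finset.Icc Mb (j - D)) ×ˢ Finset.range K),
    ← Finset.sum_filter_ne_zero (Finset.Icc D (j - Mb) ×ˢ (Finset.range K ×ˢ Finset.range K))]
  apply Finset.sum_nbij' (i := fun x : (ℤ × ℤ) × ℕ => (j - x.1.2 + x.2, (x.1.1.toNat, x.2)))
    (j := fun y : ℤ × ℕ × ℕ => ((((y.2.1 : ℤ)), j - y.1 + y.2.2), y.2.2))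
  · -- forward membership
    intro x hx
    simp only [Finset.mem_filter, Finset.mem_product, Finset.mem_Icc, Finset.mem_range] at hx ⊢
    obtain ⟨⟨⟨⟨hm0, hmu⟩, ⟨hkl, hku⟩⟩, hβ⟩, hne⟩ := hx
    have h1 : lzCoeff (φ ^ x.1.1.toNat) N (j - x.1.2) ≠ 0 := by
      intro h
      exact hne (by rw [h, mul_zero, zero_smul])
    have h2 : (b w).coeff (x.1.2 - x.2) ≠ 0 := by
      intro h
      exact hne (by rw [h, smul_zero])
    have hge : (x.1.1.toNat : ℤ) + D ≤ j - x.1.2 := by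
      by_contra hlt
      exact h1 (hpow0 _ _ (by omega))
    have hMk : Mb ≤ x.1.2 - x.2 := by
      by_contra hlt
      exact h2 (hMb _ (by omega))
    have heq : (P (x.1.1.toNat, x.2) * lzCoeff (φ ^ x.1.1.toNat) N ((j - x.1.2 + x.2) - x.2))
        • (b w).coeff (j - (j - x.1.2 + x.2)) ≠ 0 := by
      have e1 : (j - x.1.2 + x.2) - (x.2:ℤ) = j - x.1.2 := by ring
      have e2 : j - (j - x.1.2 + x.2) = x.1.2 - x.2 := by ring
      rw [e1, e2]
      exact hne
    refine ⟨⟨⟨by omega, by omega⟩, by omega, hβ⟩, heq⟩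
  · -- backward membership
    intro y hy
    simp only [Finset.mem_filter, Finset.mem_product, Finset.mem_Icc, Finset.mem_range] at hy ⊢
    obtain ⟨⟨⟨hBl, hBu⟩, hα, hβ⟩, hne⟩ := hy
    have h1 : lzCoeff (φ ^ y.2.1) N (y.1 - y.2.2) ≠ 0 := by
      intro h
      exact hne (by rw [h, mul_zero, zero_smul])
    have h2 : (b w).coeff (j - y.1) ≠ 0 := by
      intro h
      exact hne (by rw [h, smul_zero])
    have hge : (y.2.1 : ℤ) + D ≤ y.1 - y.2.2 := by
      by_contra hlt
      exact h1 (hpow0 _ _ (by omega))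
    have heq : (P (((y.2.1:ℤ)).toNat, y.2.2)
          * lzCoeff (φ ^ ((y.2.1:ℤ)).toNat) N (j - (j - y.1 + y.2.2)))
        • (b w).coeff ((j - y.1 + y.2.2) - y.2.2) ≠ 0 := by
      have e0 : ((y.2.1 : ℤ)).toNat = y.2.1 := Int.toNat_natCast _
      have e1 : j - (j - y.1 + y.2.2) = y.1 - (y.2.2:ℤ) := by ring
      have e2 : (j - y.1 + y.2.2) - (y.2.2:ℤ) = j - y.1 := by ring
      rw [e0, e1, e2]
      exact hne
    refine ⟨⟨⟨⟨Int.natCast_nonneg _, by omega⟩, by omega, by omega⟩, hβ⟩, heq⟩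
  · -- left inverse
    intro x hx
    simp only [Finset.mem_filter, Finset.mem_product, Finset.mem_Icc, Finset.mem_range] at hx
    obtain ⟨⟨⟨⟨hm0, _⟩, _⟩, _⟩, _⟩ := hx
    have e0 : ((x.1.1.toNat : ℤ)) = x.1.1 := Int.toNat_of_nonneg hm0
    ext <;> simp [e0] <;> ring
  · -- right inverse
    intro y hy
    have e0 : ((y.2.1 : ℤ)).toNat = y.2.1 := Int.toNat_natCast _
    ext <;> simp [e0] <;> ring
  · -- values agree
    intro x hx
    have e1 : (j - x.1.2 + x.2) - (x.2:ℤ) = j - x.1.2 := by ring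
    have e2 : j - (j - x.1.2 + x.2) = x.1.2 - x.2 := by ring
    rw [e1, e2]

end Indep1


section Indep2

variable {W : Type} [AddCommGroup W] [Module ℂ W] {φ : LZ}

lemma conv_sum (hu : IsUnit φ) {N : ℕ} {D : ℤ}
    (hgl : ∀ (m : ℤ) (k : ℕ), k ≤ N → ∀ j' : ℤ, j' < m + D → lzCoeff (zpowR φ m) k j' = 0)
    (α β : ℕ) (m' : ℤ) (j Ma : ℤ) (hm' : Ma ≤ m') :
    lzCoeff (zpowR φ (m' + α)) N (j - β)
      = ∑ A ∈ Finset.range (N + 1), ∑ B ∈ Finset.Icc D (j - Ma - D),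
          lzCoeff (φ ^ α) A (B - β) * lzCoeff (zpowR φ m') (N - A) (j - B) := by
  have hzadd : zpowR φ (m' + (α:ℤ)) = φ ^ α * zpowR φ m' := by
    rw [add_comm, zpowR_add hu, zpowR_natCast]
  rw [hzadd, lzCoeff_mul, Finset.Nat.sum_antidiagonal_eq_sum_range_succ_mk]
  apply Finset.sum_congr rfl
  intro A hA
  rw [Finset.mem_range] at hA
  have h1 : ∑ᶠ B' : ℤ, lzCoeff (φ ^ α) A B' * lzCoeff (zpowR φ m') (N - A) ((j - β) - B')
      = ∑ᶠ B : ℤ, lzCoeff (φ ^ α) A (B - β) * lzCoeff (zpowR φ m') (N - A) (j - B) := by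
    rw [← finsum_comp_equiv (Equiv.subRight (β:ℤ))
      (f := fun B' => lzCoeff (φ ^ α) A B' * lzCoeff (zpowR φ m') (N - A) ((j - β) - B'))]
    apply finsum_congr
    intro B
    have hB : (Equiv.subRight (β:ℤ)) B = B - β := rfl
    rw [hB]
    congr 1
    congr 1
    ring
  rw [h1]
  rw [finsum_eq_sum_of_support_subset _ (s := Finset.Icc D (j - Ma - D)) ?hsupp]
  case hsupp =>
    intro B hB
    simp only [Function.mem_support] at hB
    have h2 : lzCoeff (φ ^ α) A (B - β) ≠ 0 := fun h => hB (by rw [h, zero_mul])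
    have h3 : lzCoeff (zpowR φ m') (N - A) (j - B) ≠ 0 := fun h => hB (by rw [h, mul_zero])
    have h4 : (α:ℤ) + D ≤ B - β := by
      by_contra hlt
      refine h2 ?_
      have h0 := hgl (α:ℤ) A (by omega) (B - β) (by omega)
      rwa [zpowR_natCast] at h0
    have h5 : m' + D ≤ j - B := by
      by_contra hlt
      exact h3 (hgl m' (N - A) (by omega) (j - B) (by omega))
    simp only [Finset.coe_Icc, Set.mem_Icc]
    omega

lemma indep_right (hcφ : (PowerSeries.constantCoeff (R := L)) φ = Xl)
    (p : MvPowerSeries (Fin 2) ℂ) (hs : substMv p φ ≠ 0) (a : EW W) :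
    substX1 φ (ps2Smul p (c2 a oneEW)) = lzSmul (substMv p φ) (substAphi φ a) := by
  classical
  have hu : IsUnit φ := isUnit_of_cc hcφ
  funext w n j
  by_cases hn : 0 ≤ n
  case neg =>
    unfold substX1
    rw [if_neg hn]
    unfold lzSmul
    symm
    apply finsum_eq_zero_of_forall_eq_zero
    intro AB
    unfold substAphi
    rw [if_neg (by omega), smul_zero]
  case pos =>
  set N : ℕ := n.toNat with hNdef
  have hNn : (N : ℤ) = n := Int.toNat_of_nonneg hn
  obtain ⟨c, hc0, hgl⟩ := zpow_vanish hcφ N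
  obtain ⟨Ma, hMa⟩ := coeff_bound (a w)
  set P : ℕ × ℕ → ℂ := fun ab => MvPowerSeries.coeff (R := ℂ) (idx2 ab.1 ab.2) p with hP
  set D : ℤ := (N:ℤ) * c with hD
  have hD0 : D ≤ 0 := mul_nonpos_of_nonneg_of_nonpos (Int.natCast_nonneg N) hc0
  have hDle : ∀ {k : ℕ}, k ≤ N → ∀ (m : ℤ) (j' : ℤ), j' < m + D →
      lzCoeff (zpowR φ m) k j' = 0 := fun {k} hk m j' h => hgl m k hk j' h
  have hpow0 : ∀ (α : ℕ) {k : ℕ}, k ≤ N → ∀ j' : ℤ, j' < (α:ℤ) + D → lzCoeff (φ ^ α) k j' = 0 := by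
    intro α k hk j' h
    have h0 := hDle hk (α : ℤ) j' h
    rwa [zpowR_natCast] at h0
  set K2 : ℕ := (j - Ma - D - D).toNat + 1 with hK2
  set FA : Finset ℕ := Finset.range (N + 1) with hFA
  set FB : Finset ℤ := Finset.Icc D (j - Ma - D) with hFB
  set Fab : Finset (ℕ × ℕ) := Finset.range K2 ×ˢ Finset.range K2 with hFab
  set Fm2 : Finset ℤ := Finset.Icc Ma (j - D - D) with hFm2
  set Fm : Finset ℤ := Finset.Icc Ma (j - D) with hFm
  set Fk : Finset ℤ := Finset.Icc (0:ℤ) (j - Ma - D) with hFk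
  -- substAphi slices on the box
  have hsA : ∀ A : ℕ, A ≤ N → ∀ B : ℤ,
      substAphi φ a w (n - A) (j - B) = sA φ a (N - A) w (j - B) := by
    intro A hA B
    unfold substAphi sA
    rw [if_pos (by omega)]
    have ht : (n - (A:ℤ)).toNat = N - A := by omega
    rw [ht]
  have hcNA : ∀ A : ℕ, A ≤ N → ∀ (m : ℤ) (j' : ℤ), j' < m + D →
      lzCoeff (zpowR φ m) (N - A) j' = 0 :=
    fun A hA m j' h => hDle (by omega) m j' h
  -- RHS computation: flatten to the quadruple sum
  have hRHS : lzSmul (substMv p φ) (substAphi φ a) w n j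
      = ∑ x ∈ (FA ×ˢ FB) ×ˢ (Fab ×ˢ Fm2),
          (P x.2.1 * lzCoeff (φ ^ x.2.1.1) x.1.1 (x.1.2 - x.2.1.2)
            * lzCoeff (zpowR φ x.2.2) (N - x.1.1) (j - x.1.2)) • (a w).coeff x.2.2 := by
    refine Eq.trans ?_ (Finset.sum_product' (FA ×ˢ FB) (Fab ×ˢ Fm2)
      (fun AB z => (P z.1 * lzCoeff (φ ^ z.1.1) AB.1 (AB.2 - z.1.2)
        * lzCoeff (zpowR φ z.2) (N - AB.1) (j - AB.2)) • (a w).coeff z.2)).symm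
    unfold lzSmul
    rw [finsum_eq_sum_of_support_subset _ (s := FA ×ˢ FB) ?hs1]
    case hs1 =>
      intro AB hAB
      simp only [Function.mem_support] at hAB
      have h1 : lzCoeff (substMv p φ) AB.1 AB.2 ≠ 0 := fun h => hAB (by rw [h, zero_smul])
      have h2 : substAphi φ a w (n - AB.1) (j - AB.2) ≠ 0 := fun h => hAB (by rw [h, smul_zero])
      have hAN : AB.1 ≤ N := by
        by_contra hgt
        refine h2 ?_
        unfold substAphi
        rw [if_neg (by omega)]
      have hBl : D ≤ AB.2 := by
        by_contra hlt
        exact h1 (substMv_lower hs hgl AB.1 hAN AB.2 (by omega))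
      have hBu : AB.2 ≤ j - Ma - D := by
        by_contra hlt
        refine h2 ?_
        rw [hsA AB.1 hAN AB.2]
        exact sA_vanish φ a (hcNA AB.1 hAN) w (fun m hm => hMa m hm) _ (by omega)
      simp only [hFA, hFB, Finset.coe_product, Set.mem_prod, Finset.coe_range, Set.mem_Iio,
        Finset.coe_Icc, Set.mem_Icc]
      omega
    apply Finset.sum_congr rfl
    intro AB hAB
    simp only [hFA, hFB, Finset.mem_product, Finset.mem_range, Finset.mem_Icc] at hAB
    have hAN : AB.1 ≤ N := by omega
    have hBl : D ≤ AB.2 := hAB.2.1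
    have hBu : AB.2 ≤ j - Ma - D := hAB.2.2
    rw [hsA AB.1 hAN AB.2]
    rw [sA_eq_sum φ a (hcNA AB.1 hAN) w (fun m hm => hMa m hm) (j - AB.2)]
    rw [Finset.sum_subset (show Finset.Icc Ma (j - AB.2 - D) ⊆ Fm2 by
        rw [hFm2]; apply Finset.Icc_subset_Icc le_rfl; omega) ?hvan]
    case hvan =>
      intro m' hm1 hm2
      rw [hFm2, Finset.mem_Icc] at hm1
      rw [Finset.mem_Icc] at hm2
      push_neg at hm2
      rw [hcNA AB.1 hAN m' (j - AB.2) (by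
        have := hm2 hm1.1
        omega), zero_smul]
    rw [substMv_coeff hs AB.1 AB.2,
      finsum_eq_sum_of_support_subset _ (s := Fab) ?hs2, Finset.sum_smul]
    case hs2 =>
      intro ab hab
      simp only [Function.mem_support] at hab
      have h1 : lzCoeff (φ ^ ab.1) AB.1 (AB.2 - ab.2) ≠ 0 := fun h => hab (by rw [h, mul_zero])
      have h4 : (ab.1:ℤ) + D ≤ AB.2 - ab.2 := by
        by_contra hlt
        exact h1 (hpow0 ab.1 hAN _ (by omega))
      simp only [hFab, Finset.coe_product, Set.mem_prod, Finset.coe_range, Set.mem_Iio]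
      constructor <;> omega
    refine Eq.trans ?_ (Finset.sum_product' Fab Fm2
      (fun ab m' => (P ab * lzCoeff (φ ^ ab.1) AB.1 (AB.2 - ab.2)
        * lzCoeff (zpowR φ m') (N - AB.1) (j - AB.2)) • (a w).coeff m')).symm
    apply Finset.sum_congr rfl
    intro ab _
    rw [Finset.smul_sum]
    apply Finset.sum_congr rfl
    intro m' _
    rw [smul_smul, mul_assoc]
  -- swap the two halves of the quadruple sum
  have hSwap : ∑ x ∈ (FA ×ˢ FB) ×ˢ (Fab ×ˢ Fm2),
        (P x.2.1 * lzCoeff (φ ^ x.2.1.1) x.1.1 (x.1.2 - x.2.1.2)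
          * lzCoeff (zpowR φ x.2.2) (N - x.1.1) (j - x.1.2)) • (a w).coeff x.2.2
      = ∑ y ∈ (Fab ×ˢ Fm2) ×ˢ (FA ×ˢ FB),
        (P y.1.1 * lzCoeff (φ ^ y.1.1.1) y.2.1 (y.2.2 - y.1.1.2)
          * lzCoeff (zpowR φ y.1.2) (N - y.2.1) (j - y.2.2)) • (a w).coeff y.1.2 := by
    apply Finset.sum_nbij' (i := fun x : (ℕ × ℤ) × ((ℕ × ℕ) × ℤ) => (x.2, x.1))
      (j := fun y : ((ℕ × ℕ) × ℤ) × (ℕ × ℤ) => (y.2, y.1))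
    · intro x hx
      simp only [Finset.mem_product] at hx ⊢
      exact ⟨hx.2, hx.1⟩
    · intro y hy
      simp only [Finset.mem_product] at hy ⊢
      exact ⟨hy.2, hy.1⟩
    · intro x _; rfl
    · intro y _; rfl
    · intro x _; rfl
  -- collapse the convolution
  have hCommon : ∑ y ∈ (Fab ×ˢ Fm2) ×ˢ (FA ×ˢ FB),
        (P y.1.1 * lzCoeff (φ ^ y.1.1.1) y.2.1 (y.2.2 - y.1.1.2)
          * lzCoeff (zpowR φ y.1.2) (N - y.2.1) (j - y.2.2)) • (a w).coeff y.1.2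
      = ∑ z ∈ Fab ×ˢ Fm2,
          (P z.1 * lzCoeff (zpowR φ (z.2 + z.1.1)) N (j - z.1.2)) • (a w).coeff z.2 := by
    refine Eq.trans (Finset.sum_product' (Fab ×ˢ Fm2) (FA ×ˢ FB)
      (fun z AB => (P z.1 * lzCoeff (φ ^ z.1.1) AB.1 (AB.2 - z.1.2)
        * lzCoeff (zpowR φ z.2) (N - AB.1) (j - AB.2)) • (a w).coeff z.2)) ?_
    apply Finset.sum_congr rfl
    intro z hz
    simp only [hFab, hFm2, Finset.mem_product, Finset.mem_range, Finset.mem_Icc] at hz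
    have hm' : Ma ≤ z.2 := hz.2.1
    rw [conv_sum hu hgl z.1.1 z.1.2 z.2 j Ma hm']
    refine Eq.trans (Finset.sum_product' FA FB
      (fun A B => (P z.1 * lzCoeff (φ ^ z.1.1) A (B - z.1.2)
        * lzCoeff (zpowR φ z.2) (N - A) (j - B)) • (a w).coeff z.2)) ?_
    rw [← hFA, ← hFB]
    rw [Finset.mul_sum, Finset.sum_smul]
    apply Finset.sum_congr rfl
    intro A _
    rw [Finset.mul_sum, Finset.sum_smul]
    apply Finset.sum_congr rfl
    intro B _
    rw [mul_assoc]
  -- LHS computation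
  have hG : ∀ m k : ℤ, ps2Smul p (c2 a oneEW) w m k
      = ∑ᶠ ab : ℕ × ℕ, P ab • (if k - ab.2 = 0 then (a w).coeff (m - ab.1) else 0) := by
    intro m k
    unfold ps2Smul
    exact finsum_congr fun ab => by rw [c2_one_right]
  have hGneg : ∀ m k : ℤ, k < 0 → ps2Smul p (c2 a oneEW) w m k = 0 := by
    intro m k hk
    rw [hG]
    exact finsum_eq_zero_of_forall_eq_zero fun ab => by rw [if_neg (by omega), smul_zero]
  have hGlow : ∀ m k : ℤ, m < Ma → ps2Smul p (c2 a oneEW) w m k = 0 := by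
    intro m k hm
    rw [hG]
    apply finsum_eq_zero_of_forall_eq_zero
    intro ab
    by_cases h : k - ab.2 = 0
    · rw [if_pos h, hMa _ (by omega), smul_zero]
    · rw [if_neg h, smul_zero]
  have hLHS0 : substX1 φ (ps2Smul p (c2 a oneEW)) w n j
      = ∑ x ∈ (Fm ×ˢ Fk) ×ˢ Finset.range K2,
          (P (x.2, x.1.2.toNat) * lzCoeff (zpowR φ x.1.1) N (j - x.1.2))
            • (a w).coeff (x.1.1 - x.2) := by
    refine Eq.trans ?_ (Finset.sum_product' (Fm ×ˢ Fk) (Finset.range K2)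
      (fun mk α => (P (α, mk.2.toNat) * lzCoeff (zpowR φ mk.1) N (j - mk.2))
        • (a w).coeff (mk.1 - α))).symm
    unfold substX1
    rw [if_pos hn]
    rw [finsum_eq_sum_of_support_subset _ (s := Fm ×ˢ Fk) ?hs1]
    case hs1 =>
      intro mk hmk
      simp only [Function.mem_support] at hmk
      have h1 : lzCoeff (zpowR φ mk.1) N (j - mk.2) ≠ 0 := fun h => hmk (by
        rw [hNdef] at h
        rw [h, zero_smul])
      have h2 : ps2Smul p (c2 a oneEW) w mk.1 mk.2 ≠ 0 := fun h => hmk (by rw [h, smul_zero])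
      have hk0 : 0 ≤ mk.2 := by
        by_contra hlt
        exact h2 (hGneg _ _ (by omega))
      have hmM : Ma ≤ mk.1 := by
        by_contra hlt
        exact h2 (hGlow _ _ (by omega))
      have hup : mk.1 + D ≤ j - mk.2 := by
        by_contra hlt
        exact h1 (hDle le_rfl mk.1 _ (by omega))
      simp only [hFm, hFk, Finset.coe_product, Set.mem_prod, Finset.coe_Icc, Set.mem_Icc]
      omega
    apply Finset.sum_congr rfl
    intro mk hmk
    simp only [hFm, hFk, Finset.mem_product, Finset.mem_Icc] at hmk
    have hk0 : 0 ≤ mk.2 := hmk.2.1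
    have hNtn : n.toNat = N := rfl
    rw [hNtn, hG]
    rw [finsum_prod_snd _ (mk.2.toNat) ?hc2]
    case hc2 =>
      intro ab hab
      by_contra hne
      exact hab (by rw [if_neg (by omega), smul_zero])
    have hmt : mk.2 - (mk.2.toNat : ℤ) = 0 := by omega
    rw [finsum_eq_sum_of_support_subset _ (s := Finset.range K2) ?hs3]
    case hs3 =>
      intro α hα
      simp only [Function.mem_support] at hα
      rw [if_pos hmt] at hα
      have h2 : (a w).coeff (mk.1 - α) ≠ 0 := fun h => hα (by rw [h, smul_zero])
      have hge : Ma ≤ mk.1 - α := by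
        by_contra hlt
        exact h2 (hMa _ (by omega))
      simp only [Finset.coe_range, Set.mem_Iio]
      have hk2 : mk.1 ≤ j - D := hmk.1.2
      omega
    rw [Finset.smul_sum]
    apply Finset.sum_congr rfl
    intro α _
    rw [if_pos hmt, smul_smul, mul_comm]
  -- bridge LHS to the common form via a support bijection
  have hBridge : ∑ x ∈ (Fm ×ˢ Fk) ×ˢ Finset.range K2,
        (P (x.2, x.1.2.toNat) * lzCoeff (zpowR φ x.1.1) N (j - x.1.2))
          • (a w).coeff (x.1.1 - x.2)
      = ∑ z ∈ Fab ×ˢ Fm2,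
          (P z.1 * lzCoeff (zpowR φ (z.2 + z.1.1)) N (j - z.1.2)) • (a w).coeff z.2 := by
    rw [← Finset.sum_filter_ne_zero ((Fm ×ˢ Fk) ×ˢ Finset.range K2),
      ← Finset.sum_filter_ne_zero (Fab ×ˢ Fm2)]
    apply Finset.sum_nbij'
      (i := fun x : (ℤ × ℤ) × ℕ => ((x.2, x.1.2.toNat), x.1.1 - x.2))
      (j := fun z : (ℕ × ℕ) × ℤ => ((z.2 + z.1.1, (z.1.2 : ℤ)), z.1.1))
    · intro x hx
      simp only [hFm, hFk, hFab, hFm2, Finset.mem_filter, Finset.mem_product, Finset.mem_Icc,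
        Finset.mem_range] at hx ⊢
      obtain ⟨⟨⟨⟨hmM, hmu⟩, hk0, hku⟩, hα⟩, hne⟩ := hx
      have h1 : lzCoeff (zpowR φ x.1.1) N (j - x.1.2) ≠ 0 := by
        intro h
        exact hne (by rw [h, mul_zero, zero_smul])
      have h2 : (a w).coeff (x.1.1 - x.2) ≠ 0 := by
        intro h
        exact hne (by rw [h, smul_zero])
      have hge : Ma ≤ x.1.1 - x.2 := by
        by_contra hlt
        exact h2 (hMa _ (by omega))
      have heq : (P (x.2, x.1.2.toNat)
            * lzCoeff (zpowR φ ((x.1.1 - x.2) + (x.2:ℤ))) N (j - (x.1.2.toNat : ℤ)))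
          • (a w).coeff (x.1.1 - x.2) ≠ 0 := by
        have e1 : (x.1.1 - x.2) + (x.2:ℤ) = x.1.1 := by ring
        have e2 : ((x.1.2.toNat : ℤ)) = x.1.2 := by omega
        rw [e1, e2]
        exact hne
      exact ⟨⟨⟨by omega, by omega⟩, by omega, by omega⟩, heq⟩
    · intro z hz
      simp only [hFm, hFk, hFab, hFm2, Finset.mem_filter, Finset.mem_product, Finset.mem_Icc,
        Finset.mem_range] at hz ⊢
      obtain ⟨⟨⟨hα, hβ⟩, hml, hmu⟩, hne⟩ := hz
      have h1 : lzCoeff (zpowR φ (z.2 + z.1.1)) N (j - z.1.2) ≠ 0 := by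
        intro h
        exact hne (by rw [h, mul_zero, zero_smul])
      have hup : (z.2 + (z.1.1:ℤ)) + D ≤ j - z.1.2 := by
        by_contra hlt
        exact h1 (hDle le_rfl _ _ (by omega))
      have heq : (P (z.1.1, ((z.1.2:ℤ)).toNat)
            * lzCoeff (zpowR φ (z.2 + z.1.1)) N (j - (z.1.2:ℤ)))
          • (a w).coeff ((z.2 + (z.1.1:ℤ)) - z.1.1) ≠ 0 := by
        have e1 : ((z.1.2 : ℤ)).toNat = z.1.2 := Int.toNat_natCast _
        have e2 : (z.2 + (z.1.1:ℤ)) - z.1.1 = z.2 := by ring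
        rw [e1, e2]
        exact hne
      refine ⟨⟨⟨⟨by omega, by omega⟩, by omega, by omega⟩, hα⟩, heq⟩
    · intro x hx
      simp only [hFm, hFk, Finset.mem_filter, Finset.mem_product, Finset.mem_Icc,
        Finset.mem_range] at hx
      obtain ⟨⟨⟨_, ⟨hk0, _⟩⟩, _⟩, _⟩ := hx
      have e2 : ((x.1.2.toNat : ℤ)) = x.1.2 := by omega
      have e1 : x.1.1 - (x.2:ℤ) + (x.2:ℤ) = x.1.1 := by ring
      simp only [e1, e2, Prod.mk.eta]
    · intro z hz
      have e1 : ((z.1.2 : ℤ)).toNat = z.1.2 := Int.toNat_natCast _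
      have e2 : z.2 + (z.1.1:ℤ) - z.1.1 = z.2 := by ring
      simp only [e1, e2, Prod.mk.eta]
    · intro x hx
      simp only [hFm, hFk, Finset.mem_filter, Finset.mem_product, Finset.mem_Icc,
        Finset.mem_range] at hx
      obtain ⟨⟨⟨_, ⟨hk0, _⟩⟩, _⟩, _⟩ := hx
      have e1 : (x.1.1 - x.2) + (x.2:ℤ) = x.1.1 := by ring
      have e2 : ((x.1.2.toNat : ℤ)) = x.1.2 := by omega
      rw [e1, e2]
  rw [hLHS0, hBridge, hRHS, hSwap, hCommon]

end Indep2


section Cancel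

variable {W : Type} [AddCommGroup W] [Module ℂ W]

lemma cancel {s : LZ} (hsne : s ≠ 0) {Y Y' : W → ℤ → ℤ → W}
    (hYt : ∃ n₀ : ℤ, ∀ w n j, n < n₀ → Y w n j = 0)
    (hYs : ∀ n : ℤ, ∃ cY : EW W, ∀ w j, (cY w).coeff j = Y w n j)
    (hY't : ∃ n₀ : ℤ, ∀ w n j, n < n₀ → Y' w n j = 0)
    (hY's : ∀ n : ℤ, ∃ cY : EW W, ∀ w j, (cY w).coeff j = Y' w n j)
    (heq : lzSmul s Y = lzSmul s Y') : Y = Y' := by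
  classical
  by_contra hne
  have hex : ∃ w n j, Y w n j ≠ Y' w n j := by
    by_contra h
    push_neg at h
    exact hne (funext fun w => funext fun n => funext fun j => h w n j)
  obtain ⟨w, n1, j1, hw⟩ := hex
  obtain ⟨n₀, hn₀⟩ := hYt
  obtain ⟨n₀', hn₀'⟩ := hY't
  have hbdd : ∀ z : ℤ, (∃ j, Y w z j ≠ Y' w z j) → min n₀ n₀' ≤ z := by
    intro z hz
    by_contra hlt
    obtain ⟨j', hj'⟩ := hz
    exact hj' (by rw [hn₀ w z j' (by omega), hn₀' w z j' (by omega)])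
  obtain ⟨nst, ⟨jex, hjex⟩, hmin⟩ :=
    Int.exists_least_of_bdd ⟨min n₀ n₀', hbdd⟩ ⟨n1, ⟨j1, hw⟩⟩
  have hnst0 : min n₀ n₀' ≤ nst := hbdd nst ⟨jex, hjex⟩
  have hDzero : ∀ m : ℤ, m < nst → ∀ j', Y w m j' = Y' w m j' := by
    intro m hm j'
    by_contra hne'
    exact absurd (hmin m ⟨j', hne'⟩) (by omega)
  obtain ⟨cY, hcY⟩ := hYs nst
  obtain ⟨cY', hcY'⟩ := hY's nst
  set d : HahnSeries ℤ W := cY w - cY' w with hd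
  have hdco : ∀ j', d.coeff j' = Y w nst j' - Y' w nst j' := by
    intro j'
    rw [hd, HahnSeries.coeff_sub, hcY, hcY']
  have hdne : d ≠ 0 := by
    intro h
    apply hjex
    have h2 := hdco jex
    rw [h, HahnSeries.coeff_zero] at h2
    exact (sub_eq_zero.mp h2.symm)
  set jst : ℤ := d.order with hjst
  have hdjst : d.coeff jst ≠ 0 := mt HahnSeries.coeff_order_eq_zero.mp hdne
  have hdlow : ∀ j', j' < jst → d.coeff j' = 0 := fun j' h =>
    HahnSeries.coeff_eq_zero_of_lt_order h
  have hYne : Y w nst jst ≠ Y' w nst jst := by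
    intro h
    apply hdjst
    rw [hdco, h, sub_self]
  -- minimal z-degree of s
  have hsex : ∃ A : ℕ, (PowerSeries.coeff (R := L) A) s ≠ 0 := by
    by_contra h
    push_neg at h
    exact hsne (PowerSeries.ext fun A => by rw [h A, map_zero])
  set Ast : ℕ := Nat.find hsex with hAst
  have hsA : (PowerSeries.coeff (R := L) Ast) s ≠ 0 := Nat.find_spec hsex
  have hsAlow : ∀ A : ℕ, A < Ast → (PowerSeries.coeff (R := L) A) s = 0 := by
    intro A hA
    have := Nat.find_min hsex hA
    exact not_not.mp this
  set u : L := (PowerSeries.coeff (R := L) Ast) s with huu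
  set Bst : ℤ := u.order with hBst
  have hsB : u.coeff Bst ≠ 0 := mt HahnSeries.coeff_order_eq_zero.mp hsA
  have hsBlow : ∀ B : ℤ, B < Bst → u.coeff B = 0 := fun B h =>
    HahnSeries.coeff_eq_zero_of_lt_order h
  set Pn : ℤ := nst + Ast with hPn
  set Qj : ℤ := jst + Bst with hQj
  have hEq : lzSmul s Y w Pn Qj = lzSmul s Y' w Pn Qj := by rw [heq]
  set MA : ℕ := (Pn - min n₀ n₀').toNat + 1 with hMA
  have hslice : ∀ A : ℕ, ∃ o : ℤ, (∀ j', j' < o → Y w (Pn - A) j' = 0) ∧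
      (∀ j', j' < o → Y' w (Pn - A) j' = 0) := by
    intro A
    obtain ⟨c1, hc1⟩ := hYs (Pn - A)
    obtain ⟨c2, hc2⟩ := hY's (Pn - A)
    obtain ⟨o1, ho1⟩ := coeff_bound (c1 w)
    obtain ⟨o2, ho2⟩ := coeff_bound (c2 w)
    exact ⟨min o1 o2, fun j' h => by rw [← hc1]; exact ho1 _ (by omega),
      fun j' h => by rw [← hc2]; exact ho2 _ (by omega)⟩
  choose oY hoY hoY' using hslice
  have hsl : ∀ (A : ℕ) (B : ℤ), B < ((PowerSeries.coeff (R := L) A) s).order → lzCoeff s A B = 0 :=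
    fun A B h => HahnSeries.coeff_eq_zero_of_lt_order h
  set SS : Finset (ℕ × ℤ) := (Finset.range MA).biUnion
    (fun A => {A} ×ˢ Finset.Icc (((PowerSeries.coeff (R := L) A) s).order) (Qj - oY A)) with hSS
  have hsub : ∀ (Z : W → ℤ → ℤ → W), (∀ n j', n < min n₀ n₀' → Z w n j' = 0) →
      (∀ (A : ℕ) (j' : ℤ), j' < oY A → Z w (Pn - A) j' = 0) →
      (Function.support fun AB : ℕ × ℤ =>
        lzCoeff s AB.1 AB.2 • Z w (Pn - AB.1) (Qj - AB.2)) ⊆ ↑SS := by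
    intro Z htr hzb AB hAB
    simp only [Function.mem_support] at hAB
    have h1 : lzCoeff s AB.1 AB.2 ≠ 0 := fun h => hAB (by rw [h, zero_smul])
    have h2 : Z w (Pn - AB.1) (Qj - AB.2) ≠ 0 := fun h => hAB (by rw [h, smul_zero])
    have hA : AB.1 < MA := by
      by_contra hge
      exact h2 (htr _ _ (by omega))
    have hBl : ((PowerSeries.coeff (R := L) AB.1) s).order ≤ AB.2 := by
      by_contra hlt
      exact h1 (hsl _ _ (by omega))
    have hBu : AB.2 ≤ Qj - oY AB.1 := by
      by_contra hgt
      exact h2 (hzb _ _ (by omega))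
    rw [Finset.coe_biUnion]
    refine Set.mem_biUnion (Finset.mem_coe.mpr (Finset.mem_range.mpr hA)) ?_
    simp only [Finset.coe_product, Set.mem_prod, Finset.coe_singleton, Set.mem_singleton_iff,
      Finset.coe_Icc, Set.mem_Icc]
    exact ⟨by trivial, hBl, hBu⟩
  have htrY : ∀ (n : ℤ) (j' : ℤ), n < min n₀ n₀' → Y w n j' = 0 :=
    fun n j' h => hn₀ w n j' (by omega)
  have htrY' : ∀ (n : ℤ) (j' : ℤ), n < min n₀ n₀' → Y' w n j' = 0 :=
    fun n j' h => hn₀' w n j' (by omega)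
  have hYfin : lzSmul s Y w Pn Qj = ∑ AB ∈ SS,
      lzCoeff s AB.1 AB.2 • Y w (Pn - AB.1) (Qj - AB.2) :=
    finsum_eq_sum_of_support_subset _ (hsub Y htrY (fun A j' h => hoY A j' h))
  have hY'fin : lzSmul s Y' w Pn Qj = ∑ AB ∈ SS,
      lzCoeff s AB.1 AB.2 • Y' w (Pn - AB.1) (Qj - AB.2) :=
    finsum_eq_sum_of_support_subset _ (hsub Y' htrY' (fun A j' h => hoY' A j' h))
  have hmem : (Ast, Bst) ∈ SS := by
    have hA : Ast < MA := by omega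
    have hj : oY Ast ≤ jst := by
      by_contra hlt
      apply hYne
      have e : Pn - (Ast:ℤ) = nst := by omega
      have h1 := hoY Ast jst (by omega)
      have h2 := hoY' Ast jst (by omega)
      rw [e] at h1 h2
      rw [h1, h2]
    refine Finset.mem_biUnion.mpr ⟨Ast, Finset.mem_range.mpr hA, ?_⟩
    simp only [Finset.mem_product, Finset.mem_singleton, Finset.mem_Icc]
    exact ⟨by trivial, le_refl _, by omega⟩
  have hoff : ∀ AB ∈ SS \ {(Ast, Bst)},
      lzCoeff s AB.1 AB.2 • Y w (Pn - AB.1) (Qj - AB.2)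
        = lzCoeff s AB.1 AB.2 • Y' w (Pn - AB.1) (Qj - AB.2) := by
    intro AB hAB
    rw [Finset.mem_sdiff, Finset.mem_singleton] at hAB
    rcases Nat.lt_trichotomy AB.1 Ast with h | h | h
    · have hz : lzCoeff s AB.1 AB.2 = 0 := by
        unfold lzCoeff
        rw [hsAlow _ h, HahnSeries.coeff_zero]
      rw [hz, zero_smul, zero_smul]
    · rcases lt_trichotomy AB.2 Bst with hb | hb | hb
      · have hz : lzCoeff s AB.1 AB.2 = 0 := by
          have h0 : u.coeff AB.2 = 0 := hsBlow _ hb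
          unfold lzCoeff
          rw [h]
          exact h0
        rw [hz, zero_smul, zero_smul]
      · exact absurd (Prod.ext h hb) hAB.2
      · congr 1
        have e : Pn - (AB.1:ℤ) = nst := by omega
        rw [e]
        have h0 := hdlow (Qj - AB.2) (by omega)
        rw [hdco] at h0
        exact sub_eq_zero.mp h0
    · congr 1
      exact hDzero _ (by omega) _
  have hx := hEq
  rw [hYfin, hY'fin,
    Finset.sum_eq_sum_sdiff_singleton_add hmem
      (fun AB => lzCoeff s AB.1 AB.2 • Y w (Pn - AB.1) (Qj - AB.2)),
    Finset.sum_eq_sum_sdiff_singleton_add hmem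
      (fun AB => lzCoeff s AB.1 AB.2 • Y' w (Pn - AB.1) (Qj - AB.2)),
    Finset.sum_congr rfl hoff] at hx
  have hx2 := add_left_cancel hx
  have e1 : Pn - (Ast:ℤ) = nst := by omega
  have e2 : Qj - Bst = jst := by omega
  rw [e1, e2] at hx2
  have hzz : lzCoeff s Ast Bst • (Y w nst jst - Y' w nst jst) = 0 := by
    rw [smul_sub, hx2, sub_self]
  rcases smul_eq_zero.mp hzz with h | h
  · exact hsB h
  · exact hYne (sub_eq_zero.mp h)

end Cancel


end YVaux

/-- For any `a(x), b(x) ∈ ℰ(W)`, the pairs `(1_W, b(x))` and `(a(x), 1_W)` are φ-quasi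
compatible with modifier `p = 1`, `Y_ℰ^φ(1_W,z)b(x) = b(x)`,
`Y_ℰ^φ(a(x),z)1_W = a(φ(x,z))` (in particular it involves only nonnegative powers of `z`),
and its constant term in `z` is `a(x)`. -/
theorem Yphi_vacuum (φ : LZ) (hφ : IsAssociate φ) (a b : EW W) :
    substMv 1 φ ≠ 0 ∧
    IsLT2 (ps2Smul 1 (c2 oneEW b)) ∧
    IsLT2 (ps2Smul 1 (c2 a oneEW)) ∧
    Yφ φ oneEW b = (fun w n j => if n = 0 then (b w).coeff j else 0) ∧
    Yφ φ a oneEW = substAphi φ a ∧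
    (∀ (w : W) (n j : ℤ), n < 0 → Yφ φ a oneEW w n j = 0) ∧
    (∀ (w : W) (j : ℤ), Yφ φ a oneEW w 0 j = (a w).coeff j) := by
  classical
  have hφ0 : (PowerSeries.constantCoeff (R := L)) φ = Xl := hφ.1
  set Yc1 : W → ℤ → ℤ → W := fun w n j => if n = 0 then (b w).coeff j else 0 with hYc1
  -- part 4 : Yφ φ oneEW b = Yc1
  have hw1 : ∃ n₀ : ℤ, ∀ (w : W) (n j : ℤ), n < n₀ → Yc1 w n j = 0 :=
    ⟨0, fun w n j h => by rw [hYc1]; beta_reduce; rw [if_neg (by omega)]⟩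
  have hw2 : ∀ n : ℤ, ∃ c : EW W, ∀ (w : W) (j : ℤ), (c w).coeff j = Yc1 w n j := by
    intro n
    by_cases h : n = 0
    · exact ⟨b, fun w j => by rw [hYc1]; beta_reduce; rw [if_pos h]⟩
    · refine ⟨0, fun w j => by rw [hYc1]; beta_reduce; rw [if_neg h]; simp⟩
  have hw3 : lzSmul (substMv 1 φ) Yc1 = substX1 φ (ps2Smul 1 (c2 oneEW b)) := by
    rw [YVaux.substMv_one, YVaux.lzSmul_one, YVaux.ps2Smul_one, YVaux.substX1_one_left]
  have hex1 : ∃ Y : W → ℤ → ℤ → W,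
      (∃ n₀ : ℤ, ∀ w n j, n < n₀ → Y w n j = 0) ∧
      (∀ n : ℤ, ∃ c : EW W, ∀ w j, (c w).coeff j = Y w n j) ∧
      ∃ p : MvPowerSeries (Fin 2) ℂ, substMv p φ ≠ 0 ∧
        IsLT2 (ps2Smul p (c2 oneEW b)) ∧
        lzSmul (substMv p φ) Y = substX1 φ (ps2Smul p (c2 oneEW b)) :=
    ⟨Yc1, hw1, hw2, 1, YVaux.substMv_one_ne φ, YVaux.isLT2_one_left b, hw3⟩
  have h4 : Yφ φ oneEW b = Yc1 := by
    unfold Yφ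
    rw [dif_pos hex1]
    obtain ⟨hc1, hc2, p, hp1, hp2, hp3⟩ := hex1.choose_spec
    refine YVaux.cancel hp1 hc1 hc2 hw1 hw2 ?_
    rw [hp3, YVaux.indep_left hφ0 p hp1 b, ← hYc1]
  -- part 5 : Yφ φ a oneEW = substAphi φ a
  have hw1' : ∃ n₀ : ℤ, ∀ (w : W) (n j : ℤ), n < n₀ → substAphi φ a w n j = 0 :=
    ⟨0, fun w n j h => by unfold substAphi; rw [if_neg (by omega)]⟩
  have hw2' : ∀ n : ℤ, ∃ c : EW W, ∀ (w : W) (j : ℤ), (c w).coeff j = substAphi φ a w n j := by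
    intro n
    by_cases h : 0 ≤ n
    · obtain ⟨c, hc0, hcc⟩ := YVaux.sA_spec φ hφ0 n.toNat
      refine ⟨YVaux.aSlice φ a n.toNat hcc, fun w j => ?_⟩
      rw [YVaux.aSlice_coeff]
      unfold substAphi YVaux.sA
      rw [if_pos h]
    · refine ⟨0, fun w j => by unfold substAphi; rw [if_neg h]; simp⟩
  have hw3' : lzSmul (substMv 1 φ) (substAphi φ a) = substX1 φ (ps2Smul 1 (c2 a oneEW)) := by
    rw [YVaux.substMv_one, YVaux.lzSmul_one, YVaux.ps2Smul_one, YVaux.substX1_one_right]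
  have hex2 : ∃ Y : W → ℤ → ℤ → W,
      (∃ n₀ : ℤ, ∀ w n j, n < n₀ → Y w n j = 0) ∧
      (∀ n : ℤ, ∃ c : EW W, ∀ w j, (c w).coeff j = Y w n j) ∧
      ∃ p : MvPowerSeries (Fin 2) ℂ, substMv p φ ≠ 0 ∧
        IsLT2 (ps2Smul p (c2 a oneEW)) ∧
        lzSmul (substMv p φ) Y = substX1 φ (ps2Smul p (c2 a oneEW)) :=
    ⟨substAphi φ a, hw1', hw2', 1, YVaux.substMv_one_ne φ, YVaux.isLT2_one_right a, hw3'⟩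
  have h5 : Yφ φ a oneEW = substAphi φ a := by
    unfold Yφ
    rw [dif_pos hex2]
    obtain ⟨hc1, hc2, p, hp1, hp2, hp3⟩ := hex2.choose_spec
    refine YVaux.cancel hp1 hc1 hc2 hw1' hw2' ?_
    rw [hp3, YVaux.indep_right hφ0 p hp1 a]
  refine ⟨YVaux.substMv_one_ne φ, YVaux.isLT2_one_left b, YVaux.isLT2_one_right a, h4, h5,
    ?_, ?_⟩
  · intro w n j hn
    rw [h5]
    unfold substAphi
    rw [if_neg (by omega)]
  · intro w j
    rw [h5]
    unfold substAphi
    rw [if_pos le_rfl]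
    have ht0 : (0:ℤ).toNat = 0 := rfl
    rw [ht0]
    rw [finsum_eq_single _ j ?hz]
    · rw [YVaux.lzCoeff_zpowR_zero hφ0, if_pos rfl, one_smul]
    case hz =>
      intro m hm
      rw [YVaux.lzCoeff_zpowR_zero hφ0, if_neg (fun h => hm h.symm), zero_smul]

end
end

section
/- Let W be a complex vector space. Every S_trig-local subset of ℰ(W) is compatible, and every quasi S_trig-local subset of ℰ(W) is quasi compatible. -/
noncomputable section
open scoped Classical

variable (W : Type) [AddCommGroup W] [Module ℂ W]

variable {W}

/-- `ℂ((x₂))((x₁))` (outer variable `x₁`). -/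
abbrev LL1 : Type := LaurentSeries L

/-- the element of `ℂ((x₂))((x₁))` with prescribed coefficients (coefficient of
`x₁^m x₂^n`), when it exists (else `0`). -/
def mkLL1 (c : ℤ → ℤ → ℂ) : LL1 :=
  if h : ∃ g : LL1, ∀ m n, (g.coeff m).coeff n = c m n then h.choose else 0

/-- the homogenization `x₂^D f(x₁/x₂)` of a polynomial, inside `ℂ((x₂))((x₁))`. -/
def homog (f : Polynomial ℂ) (D : ℕ) : LL1 :=
  mkLL1 fun m n => if 0 ≤ m ∧ m + n = (D : ℤ) then f.coeff m.toNat else 0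

/-- the expansion `ι_{x₂,x₁}(q(x₁/x₂)) ∈ ℂ((x₂))((x₁))` of the rational function
`q = f/g ∈ ℂ(x)` in `x₁/x₂`: it equals `ι(x₂^D f(x₁/x₂)) / ι(x₂^D g(x₁/x₂))`, division in
the field `ℂ((x₂))((x₁))`. -/
def iotaExp (f g : Polynomial ℂ) : LL1 :=
  homog f (max f.natDegree g.natDegree) / homog g (max f.natDegree g.natDegree)

/-- multiplication of a raw two-variable series by an element of `ℂ((x₂))((x₁))`. -/
def ll1Smul (s : LL1) (F : W → ℤ → ℤ → W) : W → ℤ → ℤ → W :=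
  fun w m n => ∑ᶠ ab : ℤ × ℤ, ((s.coeff ab.1).coeff ab.2) • F w (m - ab.1) (n - ab.2)

/-- multiplication of a raw two-variable series by `p(x₁/x₂)`, `p` a polynomial. -/
def ratScalarSmul (p : Polynomial ℂ) (F : W → ℤ → ℤ → W) : W → ℤ → ℤ → W :=
  fun w m n => ∑ i ∈ Finset.range (p.natDegree + 1), p.coeff i • F w (m - i) (n + i)

/-- `U ⊆ ℰ(W)` is `S_trig`-local: for `a(x),b(x) ∈ U` there are `u_i(x),v_i(x) ∈ U` and
rational functions `q_i ∈ ℂ(x)` (written `q_i = qn_i/qd_i`) with `(x₁-x₂)^k a(x₁)b(x₂)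
= (x₁-x₂)^k Σ_i ι_{x₂,x₁}(q_i(x₁/x₂)) u_i(x₂) v_i(x₁)` for some `k ∈ ℕ`. -/
def STrigLocal (U : Set (EW W)) : Prop :=
  ∀ a ∈ U, ∀ b ∈ U,
    ∃ (r : ℕ) (u v : Fin r → EW W) (qn qd : Fin r → Polynomial ℂ) (k : ℕ),
      (∀ i, u i ∈ U) ∧ (∀ i, v i ∈ U) ∧ (∀ i, qd i ≠ 0) ∧
      ps2Smul ((MvPowerSeries.X 0 - MvPowerSeries.X 1) ^ k) (c2 a b)
        = ps2Smul ((MvPowerSeries.X 0 - MvPowerSeries.X 1) ^ k)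
            (fun w m n => ∑ i, ll1Smul (iotaExp (qn i) (qd i)) (c2swap (u i) (v i)) w m n)

/-- `U ⊆ ℰ(W)` is quasi `S_trig`-local: as above but with `(x₁-x₂)^k` weakened to
`p(x₁/x₂)` for some nonzero polynomial `p(x) ∈ ℂ[x]`. -/
def QuasiSTrigLocal (U : Set (EW W)) : Prop :=
  ∀ a ∈ U, ∀ b ∈ U,
    ∃ (r : ℕ) (u v : Fin r → EW W) (qn qd : Fin r → Polynomial ℂ) (p : Polynomial ℂ),
      (∀ i, u i ∈ U) ∧ (∀ i, v i ∈ U) ∧ (∀ i, qd i ≠ 0) ∧ p ≠ 0 ∧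
      ratScalarSmul p (c2 a b)
        = ratScalarSmul p
            (fun w m n => ∑ i, ll1Smul (iotaExp (qn i) (qd i)) (c2swap (u i) (v i)) w m n)

-- ===================== auxiliary development =====================
section Aux
open Finset
open scoped Pointwise

/-- truncation of Hahn series over `ℤ`. -/
lemma hahn_trunc {M : Type*} [Zero M] (x : HahnSeries ℤ M) : ∃ N : ℤ, ∀ n < N, x.coeff n = 0 := by
  by_cases hx : x = 0
  · exact ⟨0, fun n _ => by simp [hx]⟩
  · exact ⟨x.order, fun n hn => HahnSeries.coeff_eq_zero_of_lt_order hn⟩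

/-- exchanging a finite sum with a `finsum`. -/
lemma exch {τ M : Type*} [AddCommMonoid M] (T : Finset τ) (f : τ → (ℤ × ℤ) → M)
    (hf : ∀ t ∈ T, (Function.support (f t)).Finite) :
    ∑ t ∈ T, ∑ᶠ x, f t x = ∑ᶠ x, ∑ t ∈ T, f t x := by
  classical
  induction T using Finset.cons_induction with
  | empty => simp
  | cons a T ha ih =>
      have hfa := hf a (Finset.mem_cons_self a T)
      have hfT : ∀ t ∈ T, (Function.support (f t)).Finite :=
        fun t ht => hf t (Finset.mem_cons.2 (Or.inr ht))
      have hsum : (Function.support fun x => ∑ t ∈ T, f t x).Finite := by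
        apply Set.Finite.subset (Set.Finite.biUnion T.finite_toSet
          (fun t (ht : t ∈ T) => hfT t ht))
        intro x hx
        simp only [Function.mem_support] at hx
        by_contra hc
        apply hx
        apply Finset.sum_eq_zero
        intro t ht
        by_contra hft
        exact hc (Set.mem_biUnion ht hft)
      rw [Finset.sum_cons]
      rw [ih hfT]
      rw [← finsum_add_distrib hfa hsum]
      apply finsum_congr
      intro x
      rw [Finset.sum_cons]

/-- key rearrangement: sum over the support of a product of polynomials. -/
lemma summ {σ M : Type*} [AddCommMonoid M] [Module ℂ M]
    (q₁ q₂ : MvPolynomial σ ℂ) (G : (σ →₀ ℕ) → M) :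
    ∑ d ∈ (q₁*q₂).support, MvPolynomial.coeff d (q₁*q₂) • G d
      = ∑ e ∈ q₁.support, ∑ f ∈ q₂.support,
          (MvPolynomial.coeff e q₁ * MvPolynomial.coeff f q₂) • G (e+f) := by
  classical
  have hsub : (q₁*q₂).support ⊆ q₁.support + q₂.support := MvPolynomial.support_mul q₁ q₂
  rw [Finset.sum_subset hsub (fun d _ hd => by
    rw [MvPolynomial.notMem_support_iff.1 hd, zero_smul])]
  have h1 : ∀ d ∈ q₁.support + q₂.support, MvPolynomial.coeff d (q₁*q₂) • G d
      = ∑ x ∈ Finset.HasAntidiagonal.antidiagonal d,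
          (MvPolynomial.coeff x.1 q₁ * MvPolynomial.coeff x.2 q₂) • G (x.1 + x.2) := by
    intro d _
    rw [MvPolynomial.coeff_mul, Finset.sum_smul]
    exact Finset.sum_congr rfl (fun x hx => by rw [Finset.HasAntidiagonal.mem_antidiagonal.1 hx])
  rw [Finset.sum_congr rfl h1]
  rw [← Finset.sum_biUnion (by
    intro a _ b _ hab
    apply Finset.disjoint_left.2
    intro x hxa hxb
    exact hab (by rw [← Finset.HasAntidiagonal.mem_antidiagonal.1 hxa, ← Finset.HasAntidiagonal.mem_antidiagonal.1 hxb]))]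
  rw [← Finset.sum_product']
  refine (Finset.sum_subset ?_ ?_).symm
  · intro x hx
    rw [Finset.mem_biUnion]
    refine ⟨x.1 + x.2, ?_, Finset.HasAntidiagonal.mem_antidiagonal.2 rfl⟩
    rw [Finset.mem_product] at hx
    exact Finset.add_mem_add hx.1 hx.2
  · intro x _ hx
    rw [Finset.mem_product] at hx
    push_neg at hx
    by_cases h1 : x.1 ∈ q₁.support
    · rw [MvPolynomial.notMem_support_iff.1 (hx h1), mul_zero, zero_smul]
    · rw [MvPolynomial.notMem_support_iff.1 h1, zero_mul, zero_smul]

lemma coeffPS {σ : Type} (q : MvPolynomial σ ℂ) (d : σ →₀ ℕ) :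
    MvPowerSeries.coeff (R := ℂ) d (↑q : MvPowerSeries σ ℂ) = MvPolynomial.coeff d q := by
  rw [MvPowerSeries.coeff_apply]; exact MvPolynomial.coeff_coe q d

lemma idx2_app0 (a b : ℕ) : idx2 a b 0 = a := by
  simp [idx2, Finsupp.single_apply]

lemma idx2_app1 (a b : ℕ) : idx2 a b 1 = b := by
  simp [idx2, Finsupp.single_apply]

lemma idx2_eta (d : Fin 2 →₀ ℕ) : idx2 (d 0) (d 1) = d := by
  ext t
  fin_cases t
  · exact idx2_app0 _ _
  · exact idx2_app1 _ _

end Aux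
section Aux2
open Finset
open scoped Pointwise

variable {W : Type} [AddCommGroup W] [Module ℂ W]

/-- action of a polynomial scalar on a raw multi-variable series. -/
def mactG {σ : Type} (Q : MvPolynomial σ ℂ) (F : (σ → ℤ) → W) : (σ → ℤ) → W :=
  fun m => ∑ d ∈ Q.support, MvPolynomial.coeff d Q • F (fun t => m t - d t)

lemma mactG_mul {σ : Type} (Q₁ Q₂ : MvPolynomial σ ℂ) (F : (σ → ℤ) → W) :
    mactG (Q₁ * Q₂) F = mactG Q₁ (mactG Q₂ F) := by
  funext m
  show ∑ d ∈ (Q₁*Q₂).support, MvPolynomial.coeff d (Q₁*Q₂) • F (fun t => m t - d t) = _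
  rw [summ Q₁ Q₂ (fun d => F (fun t => m t - d t))]
  unfold mactG
  rw [Finset.sum_congr rfl (fun e _ => Finset.smul_sum
    (r := MvPolynomial.coeff e Q₁)
    (f := fun f => MvPolynomial.coeff f Q₂ • F (fun t => (fun t => m t - e t) t - f t)))]
  apply Finset.sum_congr rfl
  intro e _
  apply Finset.sum_congr rfl
  intro f _
  have harg : (fun t => m t - ((e+f) t : ℕ)) = fun t => (fun t => m t - (e t : ℕ)) t - (f t : ℕ) := by
    funext t
    rw [Finsupp.add_apply]
    push_cast
    ring
  rw [mul_smul, harg]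

lemma mactG_one {σ : Type} (F : (σ → ℤ) → W) : mactG 1 F = F := by
  funext m
  unfold mactG
  have hsub : (1 : MvPolynomial σ ℂ).support ⊆ {0} := by
    intro d hd
    rw [Finset.mem_singleton]
    by_contra hne
    exact (MvPolynomial.mem_support_iff.1 hd) (by
      rw [← MvPolynomial.C_1, MvPolynomial.coeff_C, if_neg (fun h => hne h.symm)])
  rw [Finset.sum_subset hsub (fun d _ hd => by
    rw [MvPolynomial.notMem_support_iff.1 hd, zero_smul])]
  simp

lemma mactG_sum {σ τ : Type} (Q : MvPolynomial σ ℂ) (T : Finset τ) (H : τ → (σ → ℤ) → W) :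
    mactG Q (fun m => ∑ t ∈ T, H t m) = fun m => ∑ t ∈ T, mactG Q (H t) m := by
  funext m
  unfold mactG
  rw [Finset.sum_congr rfl (fun d _ => Finset.smul_sum)]
  exact Finset.sum_comm

lemma mactG_smul {σ : Type} (Q : MvPolynomial σ ℂ) (c : ℂ) (H : (σ → ℤ) → W) :
    mactG Q (fun m => c • H m) = fun m => c • mactG Q H m := by
  funext m
  unfold mactG
  rw [Finset.smul_sum]
  exact Finset.sum_congr rfl (fun d _ => smul_comm _ _ _)

lemma mactG_trunc {σ : Type} (Q : MvPolynomial σ ℂ) (F : (σ → ℤ) → W) (s : σ) (N : ℤ)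
    (h : ∀ m, m s < N → F m = 0) : ∀ m, m s < N → mactG Q F m = 0 := by
  intro m hm
  apply Finset.sum_eq_zero
  intro d _
  rw [h _ (by
    have : (d s : ℤ) ≥ 0 := Int.ofNat_nonneg _
    omega), smul_zero]

/-- `q(x_i, x_j)` as a polynomial in variables indexed by `σ`. -/
def pairPoly {σ : Type} (q : MvPolynomial (Fin 2) ℂ) (i j : σ) : MvPolynomial σ ℂ :=
  ∑ d ∈ q.support,
    MvPolynomial.monomial (Finsupp.single i (d 0) + Finsupp.single j (d 1))
      (MvPolynomial.coeff d q)

lemma eta_inj {σ : Type} {i j : σ} (hij : i ≠ j) {d d' : Fin 2 →₀ ℕ}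
    (h : Finsupp.single i (d 0) + Finsupp.single j (d 1)
        = Finsupp.single i (d' 0) + Finsupp.single j (d' 1)) : d = d' := by
  classical
  have hi := congrFun (congrArg (fun f : σ →₀ ℕ => (f : σ → ℕ)) h) i
  have hj := congrFun (congrArg (fun f : σ →₀ ℕ => (f : σ → ℕ)) h) j
  simp [Finsupp.single_apply, hij, Ne.symm hij] at hi hj
  rw [← idx2_eta d, ← idx2_eta d']
  rw [show d 0 = d' 0 by omega, show d 1 = d' 1 by omega]

lemma pairPoly_support {σ : Type} (q : MvPolynomial (Fin 2) ℂ) (i j : σ) :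
    (pairPoly q i j).support ⊆ q.support.image
      (fun d => Finsupp.single i (d 0) + Finsupp.single j (d 1)) := by
  classical
  intro dd hdd
  rw [MvPolynomial.mem_support_iff] at hdd
  by_contra hc
  apply hdd
  unfold pairPoly
  rw [MvPolynomial.coeff_sum]
  apply Finset.sum_eq_zero
  intro d hd
  rw [MvPolynomial.coeff_monomial, if_neg]
  intro h
  exact hc (Finset.mem_image.2 ⟨d, hd, h⟩)

lemma pairPoly_coeff {σ : Type} (q : MvPolynomial (Fin 2) ℂ) {i j : σ} (hij : i ≠ j)
    (d : Fin 2 →₀ ℕ) :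
    MvPolynomial.coeff (Finsupp.single i (d 0) + Finsupp.single j (d 1)) (pairPoly q i j)
      = MvPolynomial.coeff d q := by
  classical
  unfold pairPoly
  rw [MvPolynomial.coeff_sum]
  rw [Finset.sum_eq_single d]
  · rw [MvPolynomial.coeff_monomial, if_pos rfl]
  · intro d' _ hne
    rw [MvPolynomial.coeff_monomial, if_neg (fun h => hne (eta_inj hij h))]
  · intro hd
    rw [MvPolynomial.coeff_monomial, if_pos rfl, MvPolynomial.notMem_support_iff.1 hd]

lemma mactG_pairPoly {σ : Type} (q : MvPolynomial (Fin 2) ℂ) {i j : σ} (hij : i ≠ j)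
    (F : (σ → ℤ) → W) (m : σ → ℤ) :
    mactG (pairPoly q i j) F m = ∑ d ∈ q.support, MvPolynomial.coeff d q •
      F (fun t => m t - ((Finsupp.single i (d 0) + Finsupp.single j (d 1)) t)) := by
  classical
  unfold mactG
  rw [Finset.sum_subset (pairPoly_support q i j) (fun d _ hd => by
    rw [MvPolynomial.notMem_support_iff.1 hd, zero_smul])]
  rw [Finset.sum_image (fun d _ d' _ h => eta_inj hij h)]
  apply Finset.sum_congr rfl
  intro d _
  rw [pairPoly_coeff q hij d]

lemma pairPoly_mul {σ : Type} (q₁ q₂ : MvPolynomial (Fin 2) ℂ) (i j : σ) :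
    pairPoly (q₁ * q₂) i j = pairPoly q₁ i j * pairPoly q₂ i j := by
  classical
  unfold pairPoly
  have h0 : ∀ q : MvPolynomial (Fin 2) ℂ, ∑ d ∈ q.support,
      MvPolynomial.monomial (R := ℂ) (Finsupp.single i (d 0) + Finsupp.single j (d 1))
        (MvPolynomial.coeff d q)
      = ∑ d ∈ q.support, MvPolynomial.coeff d q •
          MvPolynomial.monomial (R := ℂ) (Finsupp.single i (d 0) + Finsupp.single j (d 1)) 1 := by
    intro q
    apply Finset.sum_congr rfl
    intro d _
    rw [MvPolynomial.smul_monomial, smul_eq_mul, mul_one]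
  rw [h0, h0, h0]
  rw [summ q₁ q₂ (fun d =>
    MvPolynomial.monomial (R := ℂ) (Finsupp.single i (d 0) + Finsupp.single j (d 1)) 1)]
  rw [Finset.sum_mul_sum]
  apply Finset.sum_congr rfl
  intro e _
  apply Finset.sum_congr rfl
  intro f _
  rw [smul_mul_smul_comm]
  rw [MvPolynomial.monomial_mul, mul_one]
  congr 2
  simp only [Finsupp.add_apply, Finsupp.single_add]
  abel

lemma rename_pairPoly {σ τ : Type} (φ : σ → τ) (q : MvPolynomial (Fin 2) ℂ) (i j : σ) :
    MvPolynomial.rename φ (pairPoly q i j) = pairPoly q (φ i) (φ j) := by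
  unfold pairPoly
  rw [map_sum]
  apply Finset.sum_congr rfl
  intro d _
  rw [MvPolynomial.rename_monomial]
  congr 1
  rw [Finsupp.mapDomain_add, Finsupp.mapDomain_single, Finsupp.mapDomain_single]

lemma pairPoly_support_zero {σ : Type} (q : MvPolynomial (Fin 2) ℂ) (i j s : σ)
    (hs : s ≠ i) (hs' : s ≠ j) : ∀ d ∈ (pairPoly q i j).support, d s = 0 := by
  classical
  intro d hd
  obtain ⟨d', _, rfl⟩ := Finset.mem_image.1 (pairPoly_support q i j hd)
  simp [Finsupp.single_apply, Ne.symm hs, Ne.symm hs']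

lemma prod_support_zero {σ τ : Type} (T : Finset τ) (g : τ → MvPolynomial σ ℂ) (s : σ)
    (h : ∀ t ∈ T, ∀ d ∈ (g t).support, d s = 0) :
    ∀ d ∈ (∏ t ∈ T, g t).support, d s = 0 := by
  classical
  induction T using Finset.cons_induction with
  | empty =>
      intro d hd
      rw [Finset.prod_empty] at hd
      have : d ∈ ({0} : Finset (σ →₀ ℕ)) := by
        rw [Finset.mem_singleton]
        by_contra hne
        exact (MvPolynomial.mem_support_iff.1 hd) (by
          rw [← MvPolynomial.C_1, MvPolynomial.coeff_C, if_neg (fun hh => hne hh.symm)])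
      rw [Finset.mem_singleton.1 this]
      rfl
  | cons a T ha ih =>
      intro d hd
      rw [Finset.prod_cons] at hd
      obtain ⟨u, hu, v, hv, rfl⟩ := Finset.mem_add.1 (MvPolynomial.support_mul _ _ hd)
      rw [Finsupp.add_apply, h a (Finset.mem_cons_self a T) u hu,
        ih (fun t ht => h t (Finset.mem_cons.2 (Or.inr ht))) v hv]
end Aux2
section Aux3
open Finset
open scoped Pointwise

variable {W : Type} [AddCommGroup W] [Module ℂ W]

lemma ps2Smul_coe (q : MvPolynomial (Fin 2) ℂ) (F : W → ℤ → ℤ → W) (w : W) (m n : ℤ) :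
    ps2Smul (↑q) F w m n
      = ∑ d ∈ q.support, MvPolynomial.coeff d q • F w (m - d 0) (n - d 1) := by
  classical
  unfold ps2Smul
  have hs : (Function.support fun ab : ℕ × ℕ =>
      (MvPowerSeries.coeff (R := ℂ) (idx2 ab.1 ab.2) (↑q : MvPowerSeries (Fin 2) ℂ))
        • F w (m - ab.1) (n - ab.2))
      ⊆ ↑(q.support.image fun d => ((d 0 : ℕ), (d 1 : ℕ))) := by
    intro ab hab
    simp only [Function.mem_support] at hab
    have hne : MvPolynomial.coeff (idx2 ab.1 ab.2) q ≠ 0 := by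
      intro h
      exact hab (by rw [coeffPS, h, zero_smul])
    refine Finset.mem_coe.2 (Finset.mem_image.2 ⟨idx2 ab.1 ab.2,
      MvPolynomial.mem_support_iff.2 hne, ?_⟩)
    rw [idx2_app0, idx2_app1]
  rw [finsum_eq_sum_of_support_subset _ hs]
  rw [Finset.sum_image (fun d hd d' hd' h => by
    have h1 := congrArg Prod.fst h
    have h2 := congrArg Prod.snd h
    simp only [] at h1 h2
    rw [← idx2_eta d, ← idx2_eta d', h1, h2])]
  apply Finset.sum_congr rfl
  intro d _
  rw [idx2_eta, coeffPS]

lemma mvSmul_coe {r : ℕ} (Q : MvPolynomial (Fin r) ℂ) (F : (Fin r → ℤ) → W) (m : Fin r → ℤ) :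
    mvSmul (↑Q) F m = mactG Q F m := by
  classical
  unfold mvSmul mactG
  have hs : (Function.support fun k : Fin r →₀ ℕ =>
      (MvPowerSeries.coeff (R := ℂ) k (↑Q : MvPowerSeries (Fin r) ℂ)) • F (fun i => m i - k i))
      ⊆ ↑Q.support := by
    intro k hk
    simp only [Function.mem_support] at hk
    refine Finset.mem_coe.2 (MvPolynomial.mem_support_iff.2 (fun h => hk ?_))
    rw [coeffPS, h, zero_smul]
  rw [finsum_eq_sum_of_support_subset _ hs]
  apply Finset.sum_congr rfl
  intro k _
  rw [coeffPS]

lemma pPair_coe {r : ℕ} (q : MvPolynomial (Fin 2) ℂ) {i j : Fin r} (hij : i ≠ j) :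
    pPair (↑q) i j = ↑(pairPoly q i j) := by
  classical
  apply MvPowerSeries.ext
  intro dd
  rw [coeffPS]
  show (if ∀ l, l ≠ i → l ≠ j → dd l = 0
    then MvPowerSeries.coeff (R := ℂ) (idx2 (dd i) (dd j)) (↑q : MvPowerSeries (Fin 2) ℂ) else 0)
    = MvPolynomial.coeff dd (pairPoly q i j)
  by_cases hc : ∀ l, l ≠ i → l ≠ j → dd l = 0
  · rw [if_pos hc, coeffPS]
    have hdd : dd = Finsupp.single i ((idx2 (dd i) (dd j)) 0)
        + Finsupp.single j ((idx2 (dd i) (dd j)) 1) := by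
      rw [idx2_app0, idx2_app1]
      ext l
      by_cases hl : l = i
      · subst hl
        simp [Finsupp.single_apply, Ne.symm hij]
      · by_cases hl' : l = j
        · subst hl'
          simp [Finsupp.single_apply, hij]
        · rw [hc l hl hl', Finsupp.add_apply, Finsupp.single_apply, Finsupp.single_apply,
            if_neg (fun h => hl h.symm), if_neg (fun h => hl' h.symm), add_zero]
    conv_rhs => rw [hdd]
    rw [pairPoly_coeff q hij]
  · rw [if_neg hc]
    push_neg at hc
    obtain ⟨l, hl, hl', hlv⟩ := hc
    by_contra h
    exact hlv (pairPoly_support_zero q i j l hl hl' dd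
      (MvPolynomial.mem_support_iff.2 (fun hh => h hh.symm)))

/-- the pair set. -/
def pairSet (r : ℕ) : Finset (Fin r × Fin r) :=
  Finset.univ.filter (fun ij : Fin r × Fin r => ij.1 < ij.2)

/-- the polynomial underlying `bigP`. -/
def bigPoly (r : ℕ) (q : MvPolynomial (Fin 2) ℂ) : MvPolynomial (Fin r) ℂ :=
  ∏ ij ∈ pairSet r, pairPoly q ij.1 ij.2

lemma bigP_coe (r : ℕ) (q : MvPolynomial (Fin 2) ℂ) :
    bigP r (↑q) = ↑(bigPoly r q) := by
  classical
  unfold bigP bigPoly pairSet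
  conv_rhs => rw [← MvPolynomial.coeToMvPowerSeries.ringHom_apply]
  rw [map_prod]
  apply Finset.prod_congr rfl
  intro ij hij
  rw [MvPolynomial.coeToMvPowerSeries.ringHom_apply]
  exact pPair_coe q (ne_of_lt (Finset.mem_filter.1 hij).2)
end Aux3
section Aux4
open Finset
open scoped Pointwise

variable {W : Type} [AddCommGroup W] [Module ℂ W]

/-- pointwise (non-uniform) lower truncation in the head variable. -/
def PtTrunc (E : ℤ → (ℕ → ℤ) → W) : Prop := ∀ mt : ℕ → ℤ, ∃ N : ℤ, ∀ x < N, E x mt = 0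

/-- the basic building block `ι(q)(x₀/x₁)·u(x₁)(E)`. -/
def thgen (S : LL1) (u : EW W) (c₀ : ℤ) (E : ℤ → (ℕ → ℤ) → W) : (ℕ → ℤ) → W :=
  fun me => ∑ᶠ ab : ℤ × ℤ, ((S.coeff ab.1).coeff ab.2) •
    (u (E (me 0 - ab.1) (fun t => me (t+2)))).coeff (me 1 - c₀ - ab.2)

lemma hahn_sum_coeff {τ : Type*} (T : Finset τ) (f : τ → HahnSeries ℤ W) (g : ℤ) :
    (∑ t ∈ T, f t).coeff g = ∑ t ∈ T, (f t).coeff g := by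
  classical
  induction T using Finset.cons_induction with
  | empty => simp
  | cons a T ha ih => rw [Finset.sum_cons, Finset.sum_cons, HahnSeries.coeff_add, ih]

lemma thgen_suppfin (S : LL1) (u : EW W) (E : ℤ → (ℕ → ℤ) → W) (hE : PtTrunc E)
    (x₀ n₀ : ℤ) (mt : ℕ → ℤ) :
    (Function.support fun ab : ℤ × ℤ => ((S.coeff ab.1).coeff ab.2) •
      (u (E (x₀ - ab.1) mt)).coeff (n₀ - ab.2)).Finite := by
  classical
  obtain ⟨NS, hNS⟩ := hahn_trunc S
  obtain ⟨NE, hNE⟩ := hE mt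
  have h1 : ∀ a : ℤ, ∃ Na : ℤ, ∀ b < Na, (S.coeff a).coeff b = 0 := fun a => hahn_trunc _
  choose N1 hN1 using h1
  have h2 : ∀ a : ℤ, ∃ Ma : ℤ, ∀ y < Ma, (u (E (x₀ - a) mt)).coeff y = 0 := fun a => hahn_trunc _
  choose M2 hM2 using h2
  apply Set.Finite.subset ((Set.finite_Icc NS (x₀ - NE)).biUnion
    (fun a _ => (Set.finite_Icc (N1 a) (n₀ - M2 a)).image (fun b => (a, b))))
  intro ab hab
  simp only [Function.mem_support] at hab
  have hb : (S.coeff ab.1).coeff ab.2 ≠ 0 := fun h => hab (by rw [h, zero_smul])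
  have hcf : (u (E (x₀ - ab.1) mt)).coeff (n₀ - ab.2) ≠ 0 := fun h => hab (by rw [h, smul_zero])
  have ha1 : NS ≤ ab.1 := by
    by_contra h
    exact hb (by rw [hNS ab.1 (by omega)]; rfl)
  have ha2 : ab.1 ≤ x₀ - NE := by
    by_contra h
    exact hcf (by rw [hNE (x₀ - ab.1) (by omega), map_zero]; rfl)
  have hb1 : N1 ab.1 ≤ ab.2 := by
    by_contra h
    exact hb (hN1 ab.1 ab.2 (by omega))
  have hb2 : ab.2 ≤ n₀ - M2 ab.1 := by
    by_contra h
    exact hcf (hM2 ab.1 (n₀ - ab.2) (by omega))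
  exact Set.mem_biUnion (Set.mem_Icc.2 ⟨ha1, ha2⟩)
    ⟨ab.2, Set.mem_Icc.2 ⟨hb1, hb2⟩, by simp⟩

lemma thgen_trunc (S : LL1) (u : EW W) (c₀ : ℤ) (E : ℤ → (ℕ → ℤ) → W)
    (NS : ℤ) (hNS : ∀ n < NS, S.coeff n = 0)
    (N : ℤ) (hE : ∀ x < N, ∀ mt, E x mt = 0) :
    ∀ me : ℕ → ℤ, me 0 < N + NS → thgen S u c₀ E me = 0 := by
  intro me hme
  unfold thgen
  have : (fun ab : ℤ × ℤ => ((S.coeff ab.1).coeff ab.2) •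
      (u (E (me 0 - ab.1) (fun t => me (t+2)))).coeff (me 1 - c₀ - ab.2)) = fun _ => 0 := by
    funext ab
    by_cases h : ab.1 < NS
    · rw [hNS ab.1 h]
      show (0 : HahnSeries ℤ ℂ).coeff ab.2 • _ = (0 : W)
      rw [HahnSeries.coeff_zero, zero_smul]
    · rw [hE (me 0 - ab.1) (by omega), map_zero]
      show _ • (0 : HahnSeries ℤ W).coeff _ = (0 : W)
      rw [HahnSeries.coeff_zero, smul_zero]
  rw [this, finsum_zero]

lemma mactG_thgen (Q : MvPolynomial ℕ ℂ) (S : LL1) (u : EW W) (c₀ : ℤ)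
    (E : ℤ → (ℕ → ℤ) → W) (me : ℕ → ℤ) :
    mactG Q (thgen S u c₀ E) me = ∑ e ∈ Q.support, MvPolynomial.coeff e Q •
      thgen S u (c₀ + e 1) (fun x mt => E (x - e 0) (fun t => mt t - e (t+2))) me := by
  unfold mactG
  apply Finset.sum_congr rfl
  intro e _
  congr 1
  unfold thgen
  apply finsum_congr
  intro ab
  show ((S.coeff ab.1).coeff ab.2) •
      (u (E (me 0 - e 0 - ab.1) (fun t => me (t+2) - e (t+2)))).coeff (me 1 - e 1 - c₀ - ab.2)
    = ((S.coeff ab.1).coeff ab.2) •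
      (u (E (me 0 - ab.1 - e 0) (fun t => me (t+2) - e (t+2)))).coeff (me 1 - (c₀ + e 1) - ab.2)
  rw [show me 0 - (e 0:ℤ) - ab.1 = me 0 - ab.1 - (e 0:ℤ) by omega,
      show me 1 - (e 1:ℤ) - c₀ - ab.2 = me 1 - (c₀ + e 1) - ab.2 by omega]

lemma thgen_sum {τ : Type} (S : LL1) (u : EW W) (c₀ : ℤ) (T : Finset τ) (C : τ → ℂ)
    (E : τ → ℤ → (ℕ → ℤ) → W) (hE : ∀ t ∈ T, PtTrunc (E t)) (me : ℕ → ℤ) :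
    ∑ t ∈ T, C t • thgen S u c₀ (E t) me
      = thgen S u c₀ (fun x mt => ∑ t ∈ T, C t • E t x mt) me := by
  classical
  unfold thgen
  have step1 : ∀ t ∈ T, C t • (∑ᶠ ab : ℤ × ℤ, ((S.coeff ab.1).coeff ab.2) •
      (u (E t (me 0 - ab.1) (fun s => me (s+2)))).coeff (me 1 - c₀ - ab.2))
      = ∑ᶠ ab : ℤ × ℤ, C t • (((S.coeff ab.1).coeff ab.2) •
        (u (E t (me 0 - ab.1) (fun s => me (s+2)))).coeff (me 1 - c₀ - ab.2)) := by
    intro t _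
    rw [smul_finsum]
  rw [Finset.sum_congr rfl step1]
  rw [exch T _ (fun t ht => by
    apply Set.Finite.subset (thgen_suppfin S u (E t) (hE t ht) (me 0) (me 1 - c₀) (fun s => me (s+2)))
    intro ab hab
    simp only [Function.mem_support] at hab ⊢
    intro h
    apply hab
    rw [h, smul_zero])]
  apply finsum_congr
  intro ab
  rw [map_sum u, hahn_sum_coeff, Finset.smul_sum]
  apply Finset.sum_congr rfl
  intro t _
  rw [map_smul, HahnSeries.coeff_smul]
  exact smul_comm _ _ _
end Aux4
section Aux5
open Finset
open scoped Pointwise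

variable {W : Type} [AddCommGroup W] [Module ℂ W]

/-- raw coefficients of the composition of a list of elements of `ℰ(W)`. -/
def prodLN : List (EW W) → (ℕ → ℤ) → W → W
  | [], _, w => w
  | a :: t, me, w => (a (prodLN t (fun s => me (s+1)) w)).coeff (me 0)

/-- the chain modifier `∏_{j<n} q(x₀, x_{j+1})`. -/
def CHpoly (n : ℕ) (q : MvPolynomial (Fin 2) ℂ) : MvPolynomial ℕ ℂ :=
  ∏ j ∈ Finset.range n, pairPoly q 0 (j+1)

lemma CHpoly_mul (n : ℕ) (q₁ q₂ : MvPolynomial (Fin 2) ℂ) :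
    CHpoly n (q₁ * q₂) = CHpoly n q₁ * CHpoly n q₂ := by
  unfold CHpoly
  rw [← Finset.prod_mul_distrib]
  exact Finset.prod_congr rfl fun j _ => pairPoly_mul _ _ _ _

def psiN : ℕ → ℕ := fun t => if t = 0 then 0 else t + 1

lemma psiN_inj : Function.Injective psiN := by
  intro a b h
  unfold psiN at h
  split_ifs at h <;> omega

lemma mapD_psiN_zero (d : ℕ →₀ ℕ) : (Finsupp.mapDomain psiN d) 0 = d 0 :=
  Finsupp.mapDomain_apply psiN_inj d 0

lemma mapD_psiN_succ (d : ℕ →₀ ℕ) (t : ℕ) : (Finsupp.mapDomain psiN d) (t+2) = d (t+1) :=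
  Finsupp.mapDomain_apply psiN_inj d (t+1)

lemma rename_CHpoly (n : ℕ) (q : MvPolynomial (Fin 2) ℂ) :
    MvPolynomial.rename psiN (CHpoly n q) = ∏ j ∈ Finset.range n, pairPoly q 0 (j+2) := by
  unfold CHpoly
  rw [map_prod]
  apply Finset.prod_congr rfl
  intro j _
  rw [rename_pairPoly]
  congr 1 <;> simp [psiN]

lemma CHpoly_succ (n : ℕ) (q : MvPolynomial (Fin 2) ℂ) :
    CHpoly (n+1) q = MvPolynomial.rename psiN (CHpoly n q) * pairPoly q 0 1 := by
  rw [rename_CHpoly]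
  show ∏ j ∈ Finset.range (n+1), pairPoly q 0 (j+1) = _
  rw [Finset.prod_range_succ']

lemma RN_support_one (n : ℕ) (q : MvPolynomial (Fin 2) ℂ) :
    ∀ d ∈ (MvPolynomial.rename psiN (CHpoly n q)).support, d 1 = 0 := by
  rw [rename_CHpoly]
  apply prod_support_zero
  intro j _
  exact pairPoly_support_zero q 0 (j+2) 1 (by omega) (by omega)

lemma mactG_rename_sum {σ τ : Type} (φ : σ → τ) (hφ : Function.Injective φ) (Q : MvPolynomial σ ℂ)
    (F : (τ → ℤ) → W) (me : τ → ℤ) :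
    mactG (MvPolynomial.rename φ Q) F me
      = ∑ d ∈ Q.support, MvPolynomial.coeff d Q •
          F (fun t => me t - (Finsupp.mapDomain φ d) t) := by
  unfold mactG
  rw [MvPolynomial.support_rename_of_injective hφ]
  rw [Finset.sum_image (fun a _ b _ h => (Finsupp.mapDomain_injective hφ) h)]
  apply Finset.sum_congr rfl
  intro d _
  rw [MvPolynomial.coeff_rename_mapDomain φ hφ]

lemma eta01_app0 (x y : ℕ) : (Finsupp.single (0:ℕ) x + Finsupp.single (1:ℕ) y) 0 = x := by
  simp [Finsupp.single_apply]

lemma eta01_app1 (x y : ℕ) : (Finsupp.single (0:ℕ) x + Finsupp.single (1:ℕ) y) 1 = y := by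
  simp [Finsupp.single_apply]

lemma eta01_app2 (x y s : ℕ) : (Finsupp.single (0:ℕ) x + Finsupp.single (1:ℕ) y) (s+2) = 0 := by
  simp [Finsupp.single_apply]

lemma exists_lb {k : ℕ} (f : Fin k → ℤ) : ∃ N : ℤ, ∀ i, N ≤ f i := by
  cases k with
  | zero => exact ⟨0, fun i => i.elim0⟩
  | succ k => exact ⟨(Finset.univ.image f).min' ⟨f 0, Finset.mem_image_of_mem f (Finset.mem_univ 0)⟩,
      fun i => Finset.min'_le _ _ (Finset.mem_image_of_mem f (Finset.mem_univ i))⟩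

lemma mactG_sum2_smul {τ₁ τ₂ : Type} (Q : MvPolynomial ℕ ℂ) (T₁ : Finset τ₁) (T₂ : Finset τ₂)
    (C : τ₁ → τ₂ → ℂ) (H : τ₁ → τ₂ → (ℕ → ℤ) → W) :
    mactG Q (fun me => ∑ d ∈ T₁, ∑ i ∈ T₂, C d i • H d i me)
      = fun me => ∑ d ∈ T₁, ∑ i ∈ T₂, C d i • mactG Q (H d i) me := by
  funext me
  unfold mactG
  simp only [Finset.smul_sum]
  rw [Finset.sum_comm]
  apply Finset.sum_congr rfl
  intro d _
  rw [Finset.sum_comm]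
  apply Finset.sum_congr rfl
  intro i _
  apply Finset.sum_congr rfl
  intro e _
  exact smul_comm _ _ _
end Aux5
section Aux6
open Finset
open scoped Pointwise

variable {W : Type} [AddCommGroup W] [Module ℂ W]

lemma RN_push (n : ℕ) (q : MvPolynomial (Fin 2) ℂ) (S : LL1) (u v : EW W)
    (tl : List (EW W)) (w : W) (c₀ δ : ℤ) (me : ℕ → ℤ) :
    mactG (MvPolynomial.rename psiN (CHpoly n q))
        (thgen S u c₀ (fun x mt => (v (prodLN tl mt w)).coeff (x - δ))) me
      = thgen S u c₀ (fun x mt =>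
          mactG (CHpoly n q) (fun me' => prodLN (v :: tl) me' w)
            (fun s => Nat.casesOn s (x - δ) mt)) me := by
  classical
  rw [mactG_thgen]
  rw [Finset.sum_congr rfl (fun e he => by
    rw [RN_support_one n q e he, Nat.cast_zero, add_zero])]
  rw [thgen_sum S u c₀ _ _ _ (fun e _ => by
    intro mt
    obtain ⟨N, hN⟩ := hahn_trunc (v (prodLN tl (fun t => mt t - (e (t+2) : ℕ)) w))
    refine ⟨N + e 0 + δ, fun x hx => ?_⟩
    show (v (prodLN tl (fun t => mt t - (e (t+2) : ℕ)) w)).coeff (x - e 0 - δ) = 0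
    exact hN _ (by omega)) me]
  congr 1
  funext x mt
  show ∑ e ∈ (MvPolynomial.rename psiN (CHpoly n q)).support,
      MvPolynomial.coeff e (MvPolynomial.rename psiN (CHpoly n q)) •
        (v (prodLN tl (fun t => mt t - (e (t+2) : ℕ)) w)).coeff (x - e 0 - δ)
    = mactG (CHpoly n q) (fun me' => prodLN (v :: tl) me' w) (fun s => Nat.casesOn s (x - δ) mt)
  rw [MvPolynomial.support_rename_of_injective psiN_inj]
  rw [Finset.sum_image (fun a _ b _ h => Finsupp.mapDomain_injective psiN_inj h)]
  unfold mactG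
  apply Finset.sum_congr rfl
  intro d' _
  rw [MvPolynomial.coeff_rename_mapDomain psiN psiN_inj]
  congr 1
  show (v (prodLN tl (fun t => mt t - ((Finsupp.mapDomain psiN d') (t+2) : ℕ)) w)).coeff
        (x - (Finsupp.mapDomain psiN d') 0 - δ)
    = (v (prodLN tl (fun t => mt t - (d' (t+1) : ℕ)) w)).coeff (x - δ - d' 0)
  have harg : (fun t => mt t - ((Finsupp.mapDomain psiN d') (t+2) : ℕ))
      = fun t => mt t - (d' (t+1) : ℕ) := by
    funext t
    rw [mapD_psiN_succ]
  rw [harg, mapD_psiN_zero]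
  congr 1
  omega
end Aux6
section Aux7
open Finset
open scoped Pointwise

variable {W : Type} [AddCommGroup W] [Module ℂ W]

/-- abstract form of (quasi) `S_trig`-locality. -/
def HypRel (U : Set (EW W)) (SubS : Submonoid (MvPolynomial (Fin 2) ℂ)) : Prop :=
  ∀ a b : EW W, a ∈ U → b ∈ U →
    ∃ (k : ℕ) (u v : Fin k → EW W) (S : Fin k → LL1) (μ : MvPolynomial (Fin 2) ℂ),
      μ ∈ SubS ∧ (∀ i, u i ∈ U) ∧ (∀ i, v i ∈ U) ∧
      ps2Smul (↑μ) (c2 a b) = ps2Smul (↑μ)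
        (fun w m n => ∑ i, ll1Smul (S i) (c2swap (u i) (v i)) w m n)

lemma keyLemma {U : Set (EW W)} {SubS : Submonoid (MvPolynomial (Fin 2) ℂ)}
    (hU : HypRel U SubS) :
    ∀ (ts : List (EW W)) (c : EW W), c ∈ U → (∀ x ∈ ts, x ∈ U) →
      ∃ μ ∈ SubS, ∀ ρ : MvPolynomial (Fin 2) ℂ, ∀ w : W, ∃ N : ℤ, ∀ me : ℕ → ℤ,
        me 0 < N →
          mactG (CHpoly ts.length (ρ * μ)) (fun me' => prodLN (c :: ts) me' w) me = 0 := by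
  intro ts
  induction ts with
  | nil =>
      intro c hc _
      refine ⟨1, one_mem _, fun ρ w => ?_⟩
      obtain ⟨N, hN⟩ := hahn_trunc (c w)
      refine ⟨N, fun me hme => ?_⟩
      rw [show CHpoly (List.length []) (ρ * 1) = 1 from Finset.prod_range_zero _, mactG_one]
      exact hN (me 0) hme
  | cons a tl ih =>
      intro c hc hts
      have ha : a ∈ U := hts a (List.mem_cons_self)
      have htl : ∀ x ∈ tl, x ∈ U := fun x hx => hts x (List.mem_cons_of_mem a hx)
      obtain ⟨k, u, v, S, μ₀, hμ₀S, hu, hv, hrel⟩ := hU c a hc ha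
      choose μi hμiS hμi using fun i : Fin k => ih (v i) (hv i) htl
      refine ⟨μ₀ * ∏ i, μi i, mul_mem hμ₀S (prod_mem fun i _ => hμiS i), fun ρ w => ?_⟩
      set n := tl.length with hn
      set q : MvPolynomial (Fin 2) ℂ := ρ * (μ₀ * ∏ i, μi i) with hq
      set ρh : MvPolynomial (Fin 2) ℂ := ρ * ∏ i, μi i with hρh
      set E : (ℕ → ℤ) → W := fun me' => prodLN (c :: a :: tl) me' w with hE
      -- truncation of the chained suffix products, from the induction hypothesis
      have hKi : ∀ i : Fin k, ∃ Ni : ℤ, ∀ me' : ℕ → ℤ, me' 0 < Ni →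
          mactG (CHpoly n q) (fun me'' => prodLN (v i :: tl) me'' w) me' = 0 := by
        intro i
        have hqi : ρ * μ₀ * (∏ i' ∈ Finset.univ.erase i, μi i') * μi i = q := by
          rw [hq, ← Finset.mul_prod_erase Finset.univ μi (Finset.mem_univ i)]
          ring
        obtain ⟨Ni, hNi⟩ := hμi i (ρ * μ₀ * ∏ i' ∈ Finset.univ.erase i, μi i') w
        refine ⟨Ni, fun me' hme' => ?_⟩
        rw [show CHpoly n q = CHpoly n (ρ * μ₀ * (∏ i' ∈ Finset.univ.erase i, μi i') * μi i)
          from by rw [hqi]]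
        exact hNi me' hme'
      choose NC hNC using hKi
      choose NS hNS using fun i : Fin k => hahn_trunc (S i)
      obtain ⟨N, hN⟩ := exists_lb (fun i => NC i + NS i)
      refine ⟨N, fun me hme => ?_⟩
      -- step 1 : the swap given by the locality relation
      have key1 : mactG (pairPoly μ₀ 0 1) E = fun me => ∑ d ∈ μ₀.support, ∑ i : Fin k,
          MvPolynomial.coeff d μ₀ • thgen (S i) (u i) (d 1)
            (fun x mt => (v i (prodLN tl mt w)).coeff (x - (d 0 : ℕ))) me := by
        funext me'
        rw [mactG_pairPoly μ₀ (show (0:ℕ) ≠ 1 by omega) E me']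
        have hgen : ∀ me'' : ℕ → ℤ,
            E me'' = c2 c a (prodLN tl (fun s => me'' (s+2)) w) (me'' 0) (me'' 1) :=
          fun me'' => rfl
        have hEeval : ∀ d : Fin 2 →₀ ℕ,
            E (fun t => me' t - ((Finsupp.single (0:ℕ) (d 0) + Finsupp.single (1:ℕ) (d 1)) t))
              = c2 c a (prodLN tl (fun s => me' (s+2)) w) (me' 0 - d 0) (me' 1 - d 1) := by
          intro d
          rw [hgen]
          simp only [eta01_app0, eta01_app1, eta01_app2, Nat.cast_zero, sub_zero]
        rw [Finset.sum_congr rfl (fun d _ => by rw [hEeval d])]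
        rw [← ps2Smul_coe μ₀ (c2 c a) (prodLN tl (fun s => me' (s+2)) w) (me' 0) (me' 1)]
        rw [hrel]
        rw [ps2Smul_coe]
        apply Finset.sum_congr rfl
        intro d _
        rw [Finset.smul_sum]
        apply Finset.sum_congr rfl
        intro i _
        congr 1
        show ll1Smul (S i) (c2swap (u i) (v i)) (prodLN tl (fun s => me' (s+2)) w)
            (me' 0 - d 0) (me' 1 - d 1) = _
        unfold ll1Smul thgen c2swap
        apply finsum_congr
        intro ab
        show ((S i).coeff ab.1).coeff ab.2 •
            (u i ((v i (prodLN tl (fun s => me' (s+2)) w)).coeff (me' 0 - d 0 - ab.1))).coeff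
              (me' 1 - d 1 - ab.2)
          = ((S i).coeff ab.1).coeff ab.2 •
            (u i ((v i (prodLN tl (fun s => me' (s+2)) w)).coeff (me' 0 - ab.1 - d 0))).coeff
              (me' 1 - d 1 - ab.2)
        rw [show me' 0 - (d 0 : ℕ) - ab.1 = me' 0 - ab.1 - (d 0 : ℕ) by omega]
      -- step 2 : push the chain onto the suffix products
      have key2 : mactG (MvPolynomial.rename psiN (CHpoly n q)) (mactG (pairPoly μ₀ 0 1) E)
          = fun me => ∑ d ∈ μ₀.support, ∑ i : Fin k,
            MvPolynomial.coeff d μ₀ • thgen (S i) (u i) (d 1)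
              (fun x mt => mactG (CHpoly n q) (fun me'' => prodLN (v i :: tl) me'' w)
                (fun s => Nat.casesOn s (x - (d 0 : ℕ)) mt)) me := by
        rw [key1]
        rw [mactG_sum2_smul]
        funext me'
        apply Finset.sum_congr rfl
        intro d _
        apply Finset.sum_congr rfl
        intro i _
        congr 1
        exact RN_push n q (S i) (u i) (v i) tl w (d 1) (d 0) me'
      -- step 3 : decomposition of the full chain
      have key3 : mactG (CHpoly (n+1) q) E
          = mactG (pairPoly ρh 0 1)
              (mactG (MvPolynomial.rename psiN (CHpoly n q)) (mactG (pairPoly μ₀ 0 1) E)) := by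
        rw [← mactG_mul, ← mactG_mul]
        have hqq : μ₀ * ρh = q := by rw [hρh, hq]; ring
        have hpoly : CHpoly (n+1) q
            = pairPoly ρh 0 1 * MvPolynomial.rename psiN (CHpoly n q) * pairPoly μ₀ 0 1 := by
          rw [CHpoly_succ, show pairPoly q 0 1 = pairPoly μ₀ 0 1 * pairPoly ρh 0 1 from by
            rw [← pairPoly_mul, hqq]]
          ring
        rw [hpoly]
      -- conclusion
      rw [List.length_cons, ← hn, key3, key2, mactG_sum2_smul]
      apply Finset.sum_eq_zero
      intro d _
      apply Finset.sum_eq_zero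
      intro i _
      rw [mactG_thgen]
      rw [Finset.sum_eq_zero]
      · rw [smul_zero]
      intro e' _
      rw [thgen_trunc (S i) (u i) _ _ (NS i) (hNS i) (NC i) (fun x hx mt => by
        show mactG (CHpoly n q) (fun me'' => prodLN (v i :: tl) me'' w)
          (fun s => Nat.casesOn s (x - (e' 0 : ℕ) - (d 0 : ℕ)) (fun t => mt t - (e' (t+2) : ℕ))) = 0
        apply hNC i
        show x - (e' 0 : ℕ) - (d 0 : ℕ) < NC i
        have h1 : ((e' 0 : ℕ) : ℤ) ≥ 0 := Int.ofNat_nonneg _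
        have h2 : ((d 0 : ℕ) : ℤ) ≥ 0 := Int.ofNat_nonneg _
        omega) me (by
          have := hN i
          omega), smul_zero]
end Aux7
section Aux8
open Finset
open scoped Pointwise

variable {W : Type} [AddCommGroup W] [Module ℂ W]

/-- the product `∏_{j > l} q(x_l, x_j)`. -/
def groupProd (r : ℕ) (l : Fin r) (q : MvPolynomial (Fin 2) ℂ) : MvPolynomial (Fin r) ℂ :=
  ∏ j ∈ Finset.univ.filter (fun j : Fin r => l < j), pairPoly q l j

/-- extension of an exponent vector to `ℕ`. -/
def extV {r : ℕ} (m : Fin r → ℤ) : ℕ → ℤ := fun s => if h : s < r then m ⟨s, h⟩ else 0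

lemma prodBr : ∀ (r : ℕ) (as : Fin r → EW W) (me : ℕ → ℤ) (w : W),
    prodLN (List.ofFn as) me w = prodCoeff r as (fun i => me i) w := by
  intro r
  induction r with
  | zero => intro as me w; rw [List.ofFn_zero]; rfl
  | succ r ihr =>
      intro as me w
      rw [List.ofFn_succ]
      show ((as 0) (prodLN (List.ofFn fun t : Fin r => as t.succ) (fun s => me (s+1)) w)).coeff (me 0)
        = prodCoeff (r+1) as (fun i => me i) w
      rw [ihr]
      show ((as 0) (prodCoeff r (fun t => as t.succ) (fun i => me (i + 1)) w)).coeff (me 0)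
        = ((as 0) (prodCoeff r (fun t => as t.succ) (fun i => (fun i : Fin (r+1) => (me i : ℤ)) i.succ) w)).coeff ((fun i : Fin (r+1) => (me i : ℤ)) 0)
      simp [Fin.val_succ]

/-- transport of the head group action to the `ℕ`-indexed world. -/
lemma rename_groupProd_zero (r : ℕ) (q : MvPolynomial (Fin 2) ℂ) :
    MvPolynomial.rename (Fin.val : Fin (r+1) → ℕ) (groupProd (r+1) 0 q) = CHpoly r q := by
  unfold groupProd CHpoly
  rw [map_prod]
  refine Finset.prod_bij (fun j _ => (j : ℕ) - 1) ?_ ?_ ?_ ?_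
  · intro j hj
    have h1 : (0 : Fin (r+1)) < j := (Finset.mem_filter.1 hj).2
    have h2 : (j : ℕ) ≠ 0 := by
      intro h
      exact absurd (Fin.ext h : j = 0) (ne_of_gt h1)
    have h3 := j.isLt
    show (j : ℕ) - 1 ∈ Finset.range r
    exact Finset.mem_range.2 (by omega)
  · intro j hj j' hj' h
    have h1 : (0 : Fin (r+1)) < j := (Finset.mem_filter.1 hj).2
    have h1' : (0 : Fin (r+1)) < j' := (Finset.mem_filter.1 hj').2
    have h2 : (j : ℕ) ≠ 0 := fun h => absurd (Fin.ext h : j = 0) (ne_of_gt h1)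
    have h2' : (j' : ℕ) ≠ 0 := fun h => absurd (Fin.ext h : j' = 0) (ne_of_gt h1')
    have h4 : (j : ℕ) - 1 = (j' : ℕ) - 1 := h
    exact Fin.ext (by omega)
  · intro t ht
    have ht' := Finset.mem_range.1 ht
    refine ⟨⟨t+1, by omega⟩, Finset.mem_filter.2 ⟨Finset.mem_univ _, ?_⟩, ?_⟩
    · show (0 : Fin (r+1)) < ⟨t+1, by omega⟩
      rw [Fin.lt_def]
      simp
    · show t = ((⟨t+1, by omega⟩ : Fin (r+1)) : ℕ) - 1
      simp
  · intro j hj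
    have h1 : (0 : Fin (r+1)) < j := (Finset.mem_filter.1 hj).2
    have h2 : (j : ℕ) ≠ 0 := fun h => absurd (Fin.ext h : j = 0) (ne_of_gt h1)
    rw [rename_pairPoly]
    show pairPoly q 0 (j : ℕ) = pairPoly q 0 ((j : ℕ) - 1 + 1)
    rw [show (j : ℕ) - 1 + 1 = (j : ℕ) by omega]
end Aux8
section Aux9
open Finset
open scoped Pointwise

variable {W : Type} [AddCommGroup W] [Module ℂ W]

lemma rename_groupProd_succ (r : ℕ) (i : Fin r) (q : MvPolynomial (Fin 2) ℂ) :
    MvPolynomial.rename Fin.succ (groupProd r i q) = groupProd (r+1) i.succ q := by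
  unfold groupProd
  rw [map_prod]
  refine Finset.prod_bij (fun j _ => Fin.succ j) ?_ ?_ ?_ ?_
  · intro j hj
    refine Finset.mem_filter.2 ⟨Finset.mem_univ _, ?_⟩
    exact Fin.succ_lt_succ_iff.2 (Finset.mem_filter.1 hj).2
  · intro j _ j' _ h
    exact (Fin.succ_injective r) h
  · intro j' hj'
    have h1 : i.succ < j' := (Finset.mem_filter.1 hj').2
    have h2 : j' ≠ 0 := by
      intro h
      rw [h] at h1
      exact absurd h1 (Fin.not_lt.2 (Fin.zero_le _))
    obtain ⟨t, rfl⟩ := Fin.exists_succ_eq.2 h2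
    exact ⟨t, Finset.mem_filter.2 ⟨Finset.mem_univ _, Fin.succ_lt_succ_iff.1 h1⟩, rfl⟩
  · intro j _
    rw [rename_pairPoly]

lemma mapD_succ_zero {r : ℕ} (d : Fin r →₀ ℕ) :
    (Finsupp.mapDomain (Fin.succ : Fin r → Fin (r+1)) d) 0 = 0 := by
  apply Finsupp.mapDomain_notin_range
  rintro ⟨y, hy⟩
  exact Fin.succ_ne_zero y hy

lemma groupProd_succ_strip (r : ℕ) (i : Fin r) (p : MvPolynomial (Fin 2) ℂ)
    (as : Fin (r+1) → EW W) (w : W) (m : Fin (r+1) → ℤ) :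
    mactG (groupProd (r+1) i.succ p) (fun m' => prodCoeff (r+1) as m' w) m
      = ((as 0) (mactG (groupProd r i p)
          (fun m'' => prodCoeff r (fun t => as t.succ) m'' w) (Fin.tail m))).coeff (m 0) := by
  rw [← rename_groupProd_succ]
  rw [mactG_rename_sum Fin.succ (Fin.succ_injective r)]
  show _ = ((as 0) (mactG (groupProd r i p)
      (fun m'' => prodCoeff r (fun t => as t.succ) m'' w) (Fin.tail m))).coeff (m 0)
  unfold mactG
  rw [map_sum, hahn_sum_coeff]
  apply Finset.sum_congr rfl
  intro d _
  rw [map_smul, HahnSeries.coeff_smul]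
  congr 1
  show prodCoeff (r+1) as (fun t => m t - ((Finsupp.mapDomain Fin.succ d) t : ℕ)) w = _
  have hv0 : m 0 - (((Finsupp.mapDomain (Fin.succ : Fin r → Fin (r+1)) d) 0 : ℕ) : ℤ) = m 0 := by
    rw [mapD_succ_zero, Nat.cast_zero, sub_zero]
  have hvt : (fun t : Fin r => m t.succ - (((Finsupp.mapDomain (Fin.succ : Fin r → Fin (r+1)) d) t.succ : ℕ) : ℤ))
      = fun t : Fin r => Fin.tail m t - (d t : ℕ) := by
    funext t
    rw [Finsupp.mapDomain_apply (Fin.succ_injective r)]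
    rfl
  show ((as 0) (prodCoeff r (fun t => as t.succ)
      (fun t : Fin r => m t.succ - (((Finsupp.mapDomain Fin.succ d) t.succ : ℕ) : ℤ)) w)).coeff
        (m 0 - (((Finsupp.mapDomain Fin.succ d) 0 : ℕ) : ℤ))
    = ((as 0) (prodCoeff r (fun t => as t.succ) (fun t : Fin r => Fin.tail m t - (d t : ℕ)) w)).coeff (m 0)
  rw [hv0, hvt]

lemma asm {U : Set (EW W)} {SubS : Submonoid (MvPolynomial (Fin 2) ℂ)} (hU : HypRel U SubS) :
    ∀ (r : ℕ) (l : Fin r) (as : Fin r → EW W), (∀ i, as i ∈ U) →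
      ∃ μ ∈ SubS, ∀ ρ : MvPolynomial (Fin 2) ℂ, ∀ w : W, ∃ N : ℤ, ∀ m : Fin r → ℤ,
        m l < N → mactG (groupProd r l (ρ * μ)) (fun m' => prodCoeff r as m' w) m = 0 := by
  intro r
  induction r with
  | zero => intro l; exact l.elim0
  | succ r ihr =>
      intro l
      refine Fin.cases ?_ ?_ l
      · -- head variable
        intro as has
        obtain ⟨μ, hμS, hμ⟩ := keyLemma hU (List.ofFn (fun t : Fin r => as t.succ)) (as 0) (has 0)
          (by
            intro x hx
            obtain ⟨t, ht⟩ := List.mem_ofFn.1 hx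
            rw [← ht]
            exact has t.succ)
        refine ⟨μ, hμS, fun ρ w => ?_⟩
        obtain ⟨N, hN⟩ := hμ ρ w
        rw [List.length_ofFn] at hN
        refine ⟨N, fun m hm => ?_⟩
        have h1 : mactG (CHpoly r (ρ * μ))
            (fun me' => prodLN (as 0 :: List.ofFn (fun t : Fin r => as t.succ)) me' w) (extV m)
            = mactG (groupProd (r+1) 0 (ρ * μ)) (fun m' => prodCoeff (r+1) as m' w) m := by
          rw [← rename_groupProd_zero r (ρ * μ)]
          rw [mactG_rename_sum Fin.val Fin.val_injective]
          unfold mactG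
          apply Finset.sum_congr rfl
          intro d _
          congr 1
          rw [show (as 0 :: List.ofFn fun t : Fin r => as t.succ) = List.ofFn as from
            (List.ofFn_succ (f := as)).symm]
          rw [prodBr]
          congr 1
          funext i
          show extV m i - (((Finsupp.mapDomain Fin.val d) (i : ℕ) : ℕ) : ℤ) = m i - (d i : ℕ)
          rw [Finsupp.mapDomain_apply Fin.val_injective]
          unfold extV
          rw [dif_pos i.isLt]
        rw [← h1]
        apply hN
        show extV m 0 < N
        unfold extV
        rw [dif_pos (by omega : (0:ℕ) < r+1)]
        exact hm
      · -- non-head variable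
        intro i as has
        obtain ⟨μ, hμS, hμ⟩ := ihr i (fun t => as t.succ) (fun t => has t.succ)
        refine ⟨μ, hμS, fun ρ w => ?_⟩
        obtain ⟨N, hN⟩ := hμ ρ w
        refine ⟨N, fun m hm => ?_⟩
        rw [groupProd_succ_strip]
        rw [hN (Fin.tail m) hm, map_zero]
        exact HahnSeries.coeff_zero
end Aux9
section Aux10
open Finset
open scoped Pointwise

variable {W : Type} [AddCommGroup W] [Module ℂ W]

lemma bigPoly_split (r : ℕ) (l : Fin r) (q : MvPolynomial (Fin 2) ℂ) :
    bigPoly r q = (∏ ij ∈ (pairSet r).filter (fun ij => ¬ ij.1 = l), pairPoly q ij.1 ij.2)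
        * groupProd r l q := by
  classical
  unfold bigPoly
  rw [← Finset.prod_filter_mul_prod_filter_not (pairSet r) (fun ij => ij.1 = l)]
  rw [mul_comm]
  congr 1
  unfold groupProd
  refine Finset.prod_bij (fun ij _ => ij.2) ?_ ?_ ?_ ?_
  · intro ij hij
    have h1 := Finset.mem_filter.1 hij
    have h2 := Finset.mem_filter.1 h1.1
    refine Finset.mem_filter.2 ⟨Finset.mem_univ _, ?_⟩
    show l < ij.2
    have h3 := h2.2
    rw [h1.2] at h3
    exact h3
  · intro ij hij ij' hij' h
    have h1 := (Finset.mem_filter.1 hij).2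
    have h1' := (Finset.mem_filter.1 hij').2
    exact Prod.ext (by rw [h1, h1']) h
  · intro j hj
    have h1 := (Finset.mem_filter.1 hj).2
    exact ⟨(l, j), Finset.mem_filter.2 ⟨Finset.mem_filter.2 ⟨Finset.mem_univ _, h1⟩, rfl⟩, rfl⟩
  · intro ij hij
    have h1 := (Finset.mem_filter.1 hij).2
    rw [h1]

lemma mainGeneric {U : Set (EW W)} {SubS : Submonoid (MvPolynomial (Fin 2) ℂ)}
    (hU : HypRel U SubS) (r : ℕ) (as : Fin r → EW W) (has : ∀ i, as i ∈ U) :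
    ∃ μ ∈ SubS, IsLTrunc (fun w => mvSmul (bigP r (↑μ)) (fun m => prodCoeff r as m w)) := by
  classical
  choose μl hμlS hμl using fun l : Fin r => asm hU r l as has
  refine ⟨∏ l, μl l, prod_mem (fun l _ => hμlS l), ?_⟩
  intro w
  have hNl : ∀ l : Fin r, ∃ N : ℤ, ∀ m : Fin r → ℤ, m l < N →
      mactG (groupProd r l (∏ l', μl l')) (fun m' => prodCoeff r as m' w) m = 0 := by
    intro l
    obtain ⟨N, hN⟩ := hμl l (∏ l' ∈ Finset.univ.erase l, μl l') w
    refine ⟨N, fun m hm => ?_⟩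
    rw [show (∏ l', μl l') = (∏ l' ∈ Finset.univ.erase l, μl l') * μl l from by
      rw [mul_comm, Finset.mul_prod_erase Finset.univ μl (Finset.mem_univ l)]]
    exact hN m hm
  choose Nl hNl2 using hNl
  obtain ⟨N, hN⟩ := exists_lb Nl
  refine ⟨N, fun m hm => ?_⟩
  obtain ⟨i, hi⟩ := hm
  show mvSmul (bigP r (↑(∏ l, μl l))) (fun m => prodCoeff r as m w) m = 0
  rw [bigP_coe, mvSmul_coe, bigPoly_split r i, mactG_mul]
  exact mactG_trunc _ _ i (Nl i) (fun m' hm' => hNl2 i m' hm') m (by have := hN i; omega)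
end Aux10
section Aux11
open Finset
open scoped Pointwise

variable {W : Type} [AddCommGroup W] [Module ℂ W]

lemma coe_XsubX_pow (k : ℕ) :
    (((MvPolynomial.X 0 - MvPolynomial.X 1 : MvPolynomial (Fin 2) ℂ) ^ k :
        MvPolynomial (Fin 2) ℂ) : MvPowerSeries (Fin 2) ℂ)
      = (MvPowerSeries.X 0 - MvPowerSeries.X 1) ^ k := by
  rw [← MvPolynomial.coeToMvPowerSeries.ringHom_apply, map_pow, map_sub,
    MvPolynomial.coeToMvPowerSeries.ringHom_apply, MvPolynomial.coeToMvPowerSeries.ringHom_apply,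
    MvPolynomial.coe_X, MvPolynomial.coe_X]

/-- the nonzero polynomials form a submonoid. -/
def nzSub : Submonoid (MvPolynomial (Fin 2) ℂ) where
  carrier := {p | p ≠ 0}
  mul_mem' := fun {a b} ha hb => mul_ne_zero ha hb
  one_mem' := one_ne_zero

lemma homogP (p : Polynomial ℂ) :
    ∃ P : MvPolynomial (Fin 2) ℂ, (p ≠ 0 → P ≠ 0) ∧
      ∀ (G : W → ℤ → ℤ → W) (w : W) (m n : ℤ),
        ps2Smul (↑P) G w m n = ratScalarSmul p G w m (n - p.natDegree) := by
  classical
  set D := p.natDegree with hD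
  set P : MvPolynomial (Fin 2) ℂ :=
    ∑ i ∈ Finset.range (D+1), MvPolynomial.monomial (idx2 i (D - i)) (p.coeff i) with hP
  have hcoeff : ∀ j ∈ Finset.range (D+1), MvPolynomial.coeff (idx2 j (D - j)) P = p.coeff j := by
    intro j hj
    rw [hP, MvPolynomial.coeff_sum]
    rw [Finset.sum_eq_single j]
    · rw [MvPolynomial.coeff_monomial, if_pos rfl]
    · intro i _ hne
      rw [MvPolynomial.coeff_monomial, if_neg]
      intro h
      apply hne
      have := congrArg (fun f : Fin 2 →₀ ℕ => f 0) h
      simpa [idx2_app0] using this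
    · intro hj'
      exact absurd hj hj'
  have hsupp : P.support ⊆ (Finset.range (D+1)).image (fun i => idx2 i (D - i)) := by
    intro d hd
    rw [MvPolynomial.mem_support_iff] at hd
    by_contra hc
    apply hd
    rw [hP, MvPolynomial.coeff_sum]
    apply Finset.sum_eq_zero
    intro i hi
    rw [MvPolynomial.coeff_monomial, if_neg]
    intro h
    exact hc (Finset.mem_image.2 ⟨i, hi, h⟩)
  refine ⟨P, ?_, ?_⟩
  · intro hp h0
    have h1 := hcoeff D (Finset.mem_range.2 (by omega))
    rw [h0, MvPolynomial.coeff_zero] at h1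
    exact hp (Polynomial.leadingCoeff_eq_zero.1 h1.symm)
  · intro G w m n
    rw [ps2Smul_coe]
    rw [Finset.sum_subset hsupp (fun d _ hd => by
      rw [MvPolynomial.notMem_support_iff.1 hd, zero_smul])]
    rw [Finset.sum_image (fun i hi i' hi' h => by
      have := congrArg (fun f : Fin 2 →₀ ℕ => f 0) h
      simpa [idx2_app0] using this)]
    unfold ratScalarSmul
    rw [← hD]
    apply Finset.sum_congr rfl
    intro i hi
    rw [hcoeff i hi, idx2_app0, idx2_app1]
    have hi' := Finset.mem_range.1 hi
    rw [show n - ((D - i : ℕ) : ℤ) = n - (D : ℤ) + (i : ℕ) from by omega]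

lemma hyp_strig {U : Set (EW W)} (hS : STrigLocal U) :
    HypRel U (Submonoid.powers (MvPolynomial.X 0 - MvPolynomial.X 1 : MvPolynomial (Fin 2) ℂ)) := by
  intro a b ha hb
  obtain ⟨r, u, v, qn, qd, k, hu, hv, _, hrel⟩ := hS a ha b hb
  refine ⟨r, u, v, fun i => iotaExp (qn i) (qd i),
    (MvPolynomial.X 0 - MvPolynomial.X 1) ^ k,
    Submonoid.mem_powers_iff _ _ |>.2 ⟨k, rfl⟩, hu, hv, ?_⟩
  rw [coe_XsubX_pow k]
  exact hrel

lemma hyp_quasi {U : Set (EW W)} (hS : QuasiSTrigLocal U) : HypRel U nzSub := by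
  intro a b ha hb
  obtain ⟨r, u, v, qn, qd, p, hu, hv, _, hp, hrel⟩ := hS a ha b hb
  obtain ⟨P, hPnz, hPeq⟩ := homogP (W := W) p
  refine ⟨r, u, v, fun i => iotaExp (qn i) (qd i), P, hPnz hp, hu, hv, ?_⟩
  funext w m n
  rw [hPeq, hPeq, hrel]
end Aux11

/-- Every `S_trig`-local subset of `ℰ(W)` is compatible, and every quasi `S_trig`-local
subset of `ℰ(W)` is quasi compatible. -/
theorem strig_local_implies_compat (U : Set (EW W)) :
    (STrigLocal U → SetCompat U) ∧ (QuasiSTrigLocal U → SetQuasiCompat U) := by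
  constructor
  · intro hS r as has
    obtain ⟨μ, hμ, htr⟩ := mainGeneric (hyp_strig hS) r as has
    obtain ⟨k, hk⟩ := (Submonoid.mem_powers_iff _ _).1 hμ
    refine ⟨k, ?_⟩
    show IsLTrunc (fun w => mvSmul (bigP r ((MvPowerSeries.X 0 - MvPowerSeries.X 1) ^ k))
      (fun m => prodCoeff r as m w))
    rw [← coe_XsubX_pow k, hk]
    exact htr
  · intro hS r as has
    obtain ⟨μ, hμ, htr⟩ := mainGeneric (hyp_quasi hS) r as has
    refine ⟨↑μ, ?_, htr⟩
    intro h
    apply hμ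
    apply MvPolynomial.ext
    intro d
    have h2 := congrArg (MvPowerSeries.coeff (R := ℂ) d) h
    rw [coeffPS] at h2
    simpa using h2

end
end
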